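/- arXiv:2207.02664 — 3 statements merged into one kernel-verified Lean document; each statement's English description precedes it below -/
import Mathlib

section
/- (Courant nodal domain theorem for signed hypergraphs, weak version.) Let Γ=(H,σ) be a signed hypergraph whose underlying hypergraph H has c connected components, let L be its normalized Laplacian, λ_k its k-th smallest eigenvalue, and f_k an eigenfunction for λ_k. Then the number of weak nodal domains satisfies 𝔚(f_k) ≤ k + c − 1. In particular, if H is connected then 𝔚(f_k) ≤ k. -/
attribute [local instance] Classical.propDecidable

open Finset Matrix

/-! ## Signed hypergraphs (edges indexed by a type `E`; `sign v e ∈ {0, 1, -1}`,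
nonzero exactly on incidences) -/

structure SignedHypergraph (V E : Type) where
  sign : V → E → ℝ
  sign_values : ∀ v e, sign v e = 0 ∨ sign v e = 1 ∨ sign v e = -1

namespace SignedHypergraph

variable {V E : Type} [Fintype V] [Fintype E] [DecidableEq V] [DecidableEq E]

/-- The vertex set of an edge. -/
noncomputable def edgeVerts (G : SignedHypergraph V E) (e : E) : Finset V :=
  Finset.univ.filter fun v => G.sign v e ≠ 0

/-- The degree of a vertex. -/
noncomputable def deg (G : SignedHypergraph V E) (v : V) : ℕ :=
  (Finset.univ.filter fun e : E => G.sign v e ≠ 0).card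

/-- The sign of an edge: `sgn e = (-1)^(|e|-1) ∏_{v ∈ e} σ(v,e)`. -/
noncomputable def edgeSign (G : SignedHypergraph V E) (e : E) : ℝ :=
  (-1 : ℝ) ^ ((G.edgeVerts e).card - 1) * ∏ v ∈ G.edgeVerts e, G.sign v e

/-- The signed adjacency matrix. -/
noncomputable def adj (G : SignedHypergraph V E) : Matrix V V ℝ :=
  Matrix.of fun x y =>
    if x = y then 0
    else ∑ e ∈ Finset.univ.filter (fun e : E => G.sign x e ≠ 0 ∧ G.sign y e ≠ 0), G.edgeSign e

/-- The normalized Laplacian `L = I - D⁻¹ A`. -/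
noncomputable def lap (G : SignedHypergraph V E) : Matrix V V ℝ :=
  Matrix.of fun x y => (if x = y then (1 : ℝ) else 0) - G.adj x y / (G.deg x : ℝ)

/-- The degree-weighted inner product `⟨f, g⟩ = ∑ v deg(v) f(v) g(v)`. -/
noncomputable def dInner (G : SignedHypergraph V E) (f g : V → ℝ) : ℝ :=
  ∑ v : V, (G.deg v : ℝ) * f v * g v

/-- Two vertices share an edge. -/
def Adjacent (G : SignedHypergraph V E) (x y : V) : Prop :=
  ∃ e : E, G.sign x e ≠ 0 ∧ G.sign y e ≠ 0

/-- The underlying hypergraph is connected. -/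
def Connected (G : SignedHypergraph V E) : Prop :=
  ∀ x y : V, Relation.ReflTransGen G.Adjacent x y

/-- One step of a strong nodal domain path: `x, y` in a common edge `e` with
`f x · sgn e · f y > 0`. -/
def sStep (G : SignedHypergraph V E) (f : V → ℝ) (x y : V) : Prop :=
  ∃ e : E, G.sign x e ≠ 0 ∧ G.sign y e ≠ 0 ∧ 0 < f x * G.edgeSign e * f y

/-- The number `𝔖(f)` of strong nodal domains: equivalence classes of the support of `f`
under joining by S-paths. -/
noncomputable def strongDomainCount (G : SignedHypergraph V E) (f : V → ℝ) : ℕ :=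
  Set.ncard {D : Set V | ∃ w, f w ≠ 0 ∧ D = {x | Relation.ReflTransGen (G.sStep f) w x}}

/-- A weak nodal domain path: a walk along edges such that any two consecutive nonzeros
`v i`, `v j` of `f` (joined through zeros by the edges `e i, …, e (j-1)`) satisfy
`f (v i) · sgn (e i) ⋯ sgn (e (j-1)) · f (v j) > 0`. -/
def IsWPath (G : SignedHypergraph V E) (f : V → ℝ) {ℓ : ℕ}
    (v : Fin (ℓ + 1) → V) (e : Fin ℓ → E) : Prop :=
  (∀ t : Fin ℓ, G.sign (v t.castSucc) (e t) ≠ 0 ∧ G.sign (v t.succ) (e t) ≠ 0) ∧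
  ∀ i j : Fin (ℓ + 1), i < j → f (v i) ≠ 0 → f (v j) ≠ 0 →
    (∀ k : Fin (ℓ + 1), i < k → k < j → f (v k) = 0) →
    0 < f (v i) *
        (∏ t : Fin ℓ, if (i : ℕ) ≤ (t : ℕ) ∧ (t : ℕ) < (j : ℕ) then G.edgeSign (e t) else 1) *
        f (v j)

/-- `x` and `y` are joined by a W-path (or equal). -/
def wRel (G : SignedHypergraph V E) (f : V → ℝ) (x y : V) : Prop :=
  x = y ∨ ∃ (ℓ : ℕ) (v : Fin (ℓ + 1) → V) (e : Fin ℓ → E),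
    G.IsWPath f v e ∧ v 0 = x ∧ v (Fin.last ℓ) = y

/-- The weak nodal domain of a vertex `w` in the support of `f`: the equivalence class
of `w` under the W-path relation on the support, enlarged by the zero vertices
W-path-connected to it. -/
def weakDomain (G : SignedHypergraph V E) (f : V → ℝ) (w : V) : Set V :=
  {x | ∃ y, f y ≠ 0 ∧ G.wRel f w y ∧ G.wRel f x y}

def IsWeakNodalDomain (G : SignedHypergraph V E) (f : V → ℝ) (D : Set V) : Prop :=
  ∃ w, f w ≠ 0 ∧ D = G.weakDomain f w

/-- The number `𝔚(f)` of weak nodal domains. -/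
noncomputable def weakDomainCount (G : SignedHypergraph V E) (f : V → ℝ) : ℕ :=
  Set.ncard {D : Set V | G.IsWeakNodalDomain f D}

/-- The number of connected components of the subhypergraph induced on the vertex set `A`
with edges restricted to those satisfying `P`. -/
noncomputable def componentsOn (G : SignedHypergraph V E) (A : Finset V) (P : E → Prop) : ℕ :=
  Set.ncard {C : Set V | ∃ v ∈ A, C =
    {u | u ∈ A ∧ Relation.ReflTransGen
      (fun x y => x ∈ A ∧ y ∈ A ∧ ∃ e, P e ∧ G.sign x e ≠ 0 ∧ G.sign y e ≠ 0) v u}}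

/-- The cyclomatic number `l = ∑_e (|e|-1) - |V| + c` of the subhypergraph induced on `A`
with edges restricted to those satisfying `P`. -/
noncomputable def cyclomaticOn (G : SignedHypergraph V E) (A : Finset V) (P : E → Prop) : ℤ :=
  (∑ e ∈ Finset.univ.filter (fun e : E => P e ∧ (G.edgeVerts e ∩ A).Nonempty),
      (((G.edgeVerts e ∩ A).card : ℤ) - 1)) -
    (A.card : ℤ) + (G.componentsOn A P : ℤ)

/-- An edge all of whose pairs of (distinct) vertices `x, y` satisfy
`f x · sgn e · f y > 0`. -/
def posEdge (G : SignedHypergraph V E) (f : V → ℝ) (e : E) : Prop :=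
  ∀ x y : V, G.sign x e ≠ 0 → G.sign y e ≠ 0 → x ≠ y → 0 < f x * G.edgeSign e * f y

/-- An edge of the subhypergraph `S` on the support of `f`. -/
def sEdge (G : SignedHypergraph V E) (f : V → ℝ) (e : E) : Prop :=
  (∀ v, G.sign v e ≠ 0 → f v ≠ 0) ∧ G.posEdge f e

/-- The subhypergraph with edge set `P` contains a cycle. -/
def HasCycle (G : SignedHypergraph V E) (P : E → Prop) : Prop :=
  ∃ (q : ℕ) (v : Fin (q + 1) → V) (e : Fin q → E), 2 ≤ q ∧
    Function.Injective (fun t : Fin q => v t.castSucc) ∧ Function.Injective e ∧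
    v (Fin.last q) = v 0 ∧
    ∀ t : Fin q, P (e t) ∧ G.sign (v t.castSucc) (e t) ≠ 0 ∧ G.sign (v t.succ) (e t) ≠ 0

/-- A tree-like vertex: its removal increases the number of connected components
by `deg x - 1`. -/
def Treelike (G : SignedHypergraph V E) (x : V) : Prop :=
  (G.componentsOn (Finset.univ.erase x) (fun _ => True) : ℤ) =
    (G.componentsOn Finset.univ (fun _ => True) : ℤ) + (G.deg x : ℤ) - 1

/-- The Fiedler zero set of `f`: zeros `x` of `f` such that either all vertices sharing an
edge with `x` are zeros, or `x` is not tree-like. -/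
def fiedlerSet (G : SignedHypergraph V E) (f : V → ℝ) : Set V :=
  {x | f x = 0 ∧ ((∀ y, G.Adjacent x y → f y = 0) ∨ ¬ G.Treelike x)}

/-- Weak deletion of the vertices in `R`: each vertex of `R` is removed from every hyperedge
(possibly creating empty edges). -/
def weakDelete (G : SignedHypergraph V E) (R : Finset V) :
    SignedHypergraph {v : V // v ∉ R} E :=
  ⟨fun v e => G.sign v.1 e, fun v e => G.sign_values v.1 e⟩

end SignedHypergraph

/-! ## Plain hypergraphs -/

structure PlainHypergraph (V : Type) where
  verts : Finset V
  edges : Finset (Finset V)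
  edge_subset : ∀ e ∈ edges, e ⊆ verts

namespace PlainHypergraph

variable {V : Type} [DecidableEq V]

def Adjacent (H : PlainHypergraph V) (x y : V) : Prop := ∃ e ∈ H.edges, x ∈ e ∧ y ∈ e

def Connected (H : PlainHypergraph V) : Prop :=
  ∀ x ∈ H.verts, ∀ y ∈ H.verts, Relation.ReflTransGen H.Adjacent x y

/-- A cycle: an alternating closed sequence of distinct vertices and distinct edges
`v 0, e 0, v 1, e 1, …, v q = v 0` of length `q ≥ 2` with `v t, v (t+1) ∈ e t`. -/
def IsCycle (H : PlainHypergraph V) {q : ℕ} (v : Fin (q + 1) → V) (e : Fin q → Finset V) : Prop :=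
  2 ≤ q ∧ Function.Injective (fun t : Fin q => v t.castSucc) ∧ Function.Injective e ∧
    v (Fin.last q) = v 0 ∧
    ∀ t : Fin q, e t ∈ H.edges ∧ v t.castSucc ∈ e t ∧ v t.succ ∈ e t

def Acyclic (H : PlainHypergraph V) : Prop :=
  ¬ ∃ (q : ℕ) (v : Fin (q + 1) → V) (e : Fin q → Finset V), H.IsCycle v e

/-- The number of connected components. -/
noncomputable def ncomp (H : PlainHypergraph V) : ℕ :=
  Set.ncard {C : Set V | ∃ v ∈ H.verts, C = {u | Relation.ReflTransGen H.Adjacent v u}}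

/-- The cyclomatic number `l(H) = ∑_e (|e|-1) - |V| + c(H)`. -/
noncomputable def cyclomatic (H : PlainHypergraph V) : ℤ :=
  (∑ e ∈ H.edges, ((e.card : ℤ) - 1)) - (H.verts.card : ℤ) + (H.ncomp : ℤ)

def degree (H : PlainHypergraph V) (x : V) : ℕ := (H.edges.filter fun e => x ∈ e).card

/-- The subhypergraph induced by a vertex set `A`: edges `e ∩ A` for `e ∩ A ≠ ∅`. -/
def induced (H : PlainHypergraph V) (A : Finset V) : PlainHypergraph V where
  verts := H.verts ∩ A
  edges := (H.edges.filter fun e => (e ∩ A).Nonempty).image fun e => e ∩ A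
  edge_subset := by
    intro e' he'
    simp only [Finset.mem_image, Finset.mem_filter] at he'
    obtain ⟨e, ⟨heE, -⟩, rfl⟩ := he'
    intro x hx
    rcases Finset.mem_inter.mp hx with ⟨hxe, hxA⟩
    exact Finset.mem_inter.mpr ⟨H.edge_subset e heE hxe, hxA⟩

/-- A tree-like vertex: deleting it (induced subhypergraph on the remaining vertices)
increases the number of connected components by `deg x - 1`. -/
def Treelike (H : PlainHypergraph V) (x : V) : Prop :=
  ((H.induced (H.verts.erase x)).ncomp : ℤ) = (H.ncomp : ℤ) + (H.degree x : ℤ) - 1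

/-- Removal of a vertex together with all edges incident to it. -/
def deleteVert (H : PlainHypergraph V) (y : V) : PlainHypergraph V where
  verts := H.verts.erase y
  edges := H.edges.filter fun e => y ∉ e
  edge_subset := by
    intro e he
    rcases Finset.mem_filter.mp he with ⟨heE, hy⟩
    intro x hx
    exact Finset.mem_erase.mpr ⟨fun h => hy (h ▸ hx), H.edge_subset e heE hx⟩

/-- A spanning hyperforest of `H`: a maximal acyclic spanning subhypergraph. -/
def IsSpanningHyperforest (H T : PlainHypergraph V) : Prop :=
  T.verts = H.verts ∧ T.edges ⊆ H.edges ∧ T.Acyclic ∧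
    ∀ T' : PlainHypergraph V, T'.verts = H.verts → T'.edges ⊆ H.edges → T'.Acyclic →
      T.edges ⊆ T'.edges → T'.edges = T.edges

end PlainHypergraph

/-- The positive index of inertia of a real matrix: the number of positive roots of its
characteristic polynomial, counted with multiplicity. -/
noncomputable def posInertia {m : Type} [Fintype m] [DecidableEq m] (M : Matrix m m ℝ) : ℕ :=
  (M.charpoly.roots.filter fun x => 0 < x).card

/-- The bordered matrix `[[B, a], [aᵀ, b]]`. -/
def borderMatrix {n : ℕ} (B : Matrix (Fin n) (Fin n) ℝ) (a : Fin n → ℝ) (b : ℝ) :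
    Matrix (Fin n ⊕ Unit) (Fin n ⊕ Unit) ℝ :=
  Matrix.fromBlocks B (Matrix.of fun i _ => a i) (Matrix.of fun _ j => a j)
    (Matrix.of fun _ _ => b)

namespace CourantAux

open SignedHypergraph

variable {V E : Type} [Fintype V] [Fintype E] [DecidableEq V] [DecidableEq E]

/-- A walk indexed by naturals: `r` edges `e 0, …, e (r-1)` joining `v 0, …, v r`. -/
def NWalk (G : SignedHypergraph V E) (r : ℕ) (v : ℕ → V) (e : ℕ → E) : Prop :=
  ∀ t, t < r → G.sign (v t) (e t) ≠ 0 ∧ G.sign (v (t+1)) (e t) ≠ 0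

noncomputable def sprod (G : SignedHypergraph V E) (r : ℕ) (e : ℕ → E) : ℝ :=
  ∏ t ∈ Finset.range r, G.edgeSign (e t)

lemma edgeSign_ne_zero (G : SignedHypergraph V E) (e : E) : G.edgeSign e ≠ 0 := by
  unfold edgeSign
  apply mul_ne_zero
  · exact pow_ne_zero _ (by norm_num)
  · rw [Finset.prod_ne_zero_iff]
    intro v hv
    simp only [edgeVerts, Finset.mem_filter] at hv
    exact hv.2

lemma sprod_ne_zero (G : SignedHypergraph V E) (r : ℕ) (e : ℕ → E) : sprod G r e ≠ 0 := by
  rw [sprod, Finset.prod_ne_zero_iff]; exact fun t _ => edgeSign_ne_zero G _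

variable (G : SignedHypergraph V E) (f : V → ℝ)

/-- A single weak-nodal link: endpoints nonzero, interior zeros, positive sign product. -/
def zlink (x y : V) : Prop :=
  f x ≠ 0 ∧ f y ≠ 0 ∧ ∃ r v e, 1 ≤ r ∧ NWalk G r v e ∧ v 0 = x ∧ v r = y ∧
    (∀ t, 0 < t → t < r → f (v t) = 0) ∧ 0 < f x * sprod G r e * f y

/-- The weak nodal equivalence on the support. -/
def Rel' (x y : V) : Prop := Relation.ReflTransGen (zlink G f) x y

/-- Reaching the vertex `z` from a nonzero vertex `y` through zeros, with edge sign
product `s`. -/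
def ZReach (y : V) (s : ℝ) (z : V) : Prop :=
  f y ≠ 0 ∧ ∃ r v e, 1 ≤ r ∧ NWalk G r v e ∧ v 0 = y ∧ v r = z ∧
    (∀ t, 0 < t → t ≤ r → f (v t) = 0) ∧ s = sprod G r e

variable {G f}

lemma NWalk.rev {r v e} (h : NWalk G r v e) :
    NWalk G r (fun t => v (r - t)) (fun t => e (r - 1 - t)) := by
  intro t ht
  obtain ⟨h1, h2⟩ := h (r - 1 - t) (by omega)
  constructor
  · show G.sign (v (r - t)) (e (r - 1 - t)) ≠ 0
    have e1 : r - t = r - 1 - t + 1 := by omega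
    rw [e1]; exact h2
  · show G.sign (v (r - (t + 1))) (e (r - 1 - t)) ≠ 0
    have e2 : r - (t + 1) = r - 1 - t := by omega
    rw [e2]; exact h1

lemma sprod_rev (r : ℕ) (e : ℕ → E) : sprod G r (fun t => e (r - 1 - t)) = sprod G r e :=
  Finset.prod_range_reflect (fun t => G.edgeSign (e t)) r

lemma NWalk.concat {r₁ r₂ : ℕ} {v₁ v₂ : ℕ → V} {e₁ e₂ : ℕ → E}
    (h₁ : NWalk G r₁ v₁ e₁) (h₂ : NWalk G r₂ v₂ e₂)
    (hj : v₁ r₁ = v₂ 0) :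
    NWalk G (r₁ + r₂) (fun t => if t ≤ r₁ then v₁ t else v₂ (t - r₁))
      (fun t => if t < r₁ then e₁ t else e₂ (t - r₁)) := by
  intro t ht
  by_cases hc : t < r₁
  · have h' := h₁ t hc
    simp only [if_pos hc, if_pos (Nat.le_of_lt hc), if_pos (Nat.succ_le_of_lt hc)]
    exact h'
  · have hr : r₁ ≤ t := Nat.le_of_not_lt hc
    have h' := h₂ (t - r₁) (by omega)
    have ht1 : ¬ (t + 1 ≤ r₁) := by omega
    simp only [if_neg hc, if_neg ht1]
    constructor
    · by_cases he : t = r₁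
      · simp only [if_pos (le_of_eq he)]
        have hv : v₁ t = v₂ (t - r₁) := by
          rw [he, hj]; congr 1; omega
        rw [hv]; exact h'.1
      · have : ¬ (t ≤ r₁) := by omega
        simp only [if_neg this]
        exact h'.1
    · have : t + 1 - r₁ = t - r₁ + 1 := by omega
      rw [this]
      exact h'.2

lemma sprod_one (e : ℕ → E) : sprod G 1 e = G.edgeSign (e 0) := by
  unfold sprod; rw [Finset.prod_range_one]

lemma sprod_glue (r₁ r₂ : ℕ) (E' e₁ e₂ : ℕ → E)
    (h1 : ∀ t, t < r₁ → E' t = e₁ t) (h2 : ∀ t, t < r₂ → E' (r₁ + t) = e₂ t) :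
    sprod G (r₁ + r₂) E' = sprod G r₁ e₁ * sprod G r₂ e₂ := by
  unfold sprod
  rw [Finset.prod_range_add]
  congr 1
  · exact Finset.prod_congr rfl fun t ht => by rw [h1 t (Finset.mem_range.mp ht)]
  · exact Finset.prod_congr rfl fun t ht => by rw [h2 t (Finset.mem_range.mp ht)]

lemma zlink_symm {x y : V} (h : zlink G f x y) : zlink G f y x := by
  obtain ⟨hx, hy, r, v, e, hr, hw, h0, hrv, hz, hpos⟩ := h
  refine ⟨hy, hx, r, _, _, hr, hw.rev, ?_, ?_, ?_, ?_⟩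
  · simp only [Nat.sub_zero, hrv]
  · simp only [Nat.sub_self, h0]
  · intro t ht1 ht2
    exact hz (r - t) (by omega) (by omega)
  · rw [sprod_rev]
    nlinarith [hpos]

lemma zlink_of_edge {x y : V} (e : E) (hx : f x ≠ 0) (hy : f y ≠ 0)
    (hxe : G.sign x e ≠ 0) (hye : G.sign y e ≠ 0) (hpos : 0 < f x * G.edgeSign e * f y) :
    zlink G f x y := by
  refine ⟨hx, hy, 1, (fun t => if t = 0 then x else y), (fun _ => e), le_refl 1, ?_, ?_, ?_, ?_, ?_⟩
  · intro t ht
    have : t = 0 := by omega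
    subst this
    simp only [if_pos rfl, if_neg (by norm_num : (0:ℕ)+1 ≠ 0)]
    exact ⟨hxe, hye⟩
  · simp
  · simp
  · intro t ht1 ht2; omega
  · rw [sprod_one]; exact hpos

lemma Rel'_symm {x y : V} (h : Rel' G f x y) : Rel' G f y x := by
  induction h with
  | refl => exact Relation.ReflTransGen.refl
  | tail _ hbc ih => exact Relation.ReflTransGen.head (zlink_symm hbc) ih

lemma Rel'_trans {x y z : V} (h1 : Rel' G f x y) (h2 : Rel' G f y z) : Rel' G f x z :=
  Relation.ReflTransGen.trans h1 h2

lemma rel'_right_ne {x y : V} (h : Rel' G f x y) (hne : x ≠ y) : f y ≠ 0 := by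
  induction h with
  | refl => exact absurd rfl hne
  | tail _ hbc _ => exact hbc.2.1

/-- Merging two zero-reaches with compatible parity yields a link. -/
lemma ZReach.merge {y s z y' s'} (h : ZReach G f y s z) (h' : ZReach G f y' s' z)
    (hpos : 0 < (f y * s) * (f y' * s')) : zlink G f y y' := by
  obtain ⟨hy, r₁, v₁, e₁, hr₁, hw₁, h01, hr1v, hz₁, hs₁⟩ := h
  obtain ⟨hy', r₂, v₂, e₂, hr₂, hw₂, h02, hr2v, hz₂, hs₂⟩ := h'
  have hw₂r := hw₂.rev
  have hj : v₁ r₁ = (fun t => v₂ (r₂ - t)) 0 := by simp [hr1v, hr2v]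
  have hw := hw₁.concat hw₂r hj
  refine ⟨hy, hy', r₁ + r₂,
    (fun t => if t ≤ r₁ then v₁ t else v₂ (r₂ - (t - r₁))),
    (fun t => if t < r₁ then e₁ t else e₂ (r₂ - 1 - (t - r₁))),
    by omega, hw, ?_, ?_, ?_, ?_⟩
  · simp only [if_pos (Nat.zero_le r₁), h01]
  · have hne : ¬ (r₁ + r₂ ≤ r₁) := by omega
    simp only [if_neg hne]
    have : r₂ - (r₁ + r₂ - r₁) = 0 := by omega
    rw [this]; exact h02
  · intro t ht1 ht2
    by_cases hc : t ≤ r₁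
    · simp only [if_pos hc]
      exact hz₁ t ht1 (by omega)
    · simp only [if_neg hc]
      exact hz₂ (r₂ - (t - r₁)) (by omega) (by omega)
  · have hsp : sprod G (r₁ + r₂) (fun t => if t < r₁ then e₁ t else e₂ (r₂ - 1 - (t - r₁)))
        = sprod G r₁ e₁ * sprod G r₂ e₂ := by
      rw [sprod_glue r₁ r₂ _ e₁ (fun u => e₂ (r₂ - 1 - u))
        (fun t ht => by simp only [if_pos ht])
        (fun t ht => by
          have : ¬ (r₁ + t < r₁) := by omega
          simp only [if_neg this]
          congr 1
          omega)]
      congr 1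
      exact sprod_rev r₂ e₂
    rw [hsp, ← hs₁, ← hs₂]
    nlinarith [hpos]

lemma ZReach.extend {y s z} (h : ZReach G f y s z) {e : E} {z' : V}
    (hz' : f z' = 0) (hze : G.sign z e ≠ 0) (hz'e : G.sign z' e ≠ 0) :
    ZReach G f y (s * G.edgeSign e) z' := by
  obtain ⟨hy, r, v, ee, hr, hw, h0, hrv, hz, hs⟩ := h
  refine ⟨hy, r + 1, (fun t => if t ≤ r then v t else z'), (fun t => if t < r then ee t else e),
    by omega, ?_, ?_, ?_, ?_, ?_⟩
  · intro t ht
    by_cases hc : t < r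
    · simp only [if_pos hc, if_pos (Nat.le_of_lt hc), if_pos (Nat.succ_le_of_lt hc)]
      exact hw t hc
    · have : t = r := by omega
      subst this
      have h1 : ¬ (t + 1 ≤ t) := by omega
      simp only [if_neg (lt_irrefl t), if_pos (le_refl t), if_neg h1, hrv]
      exact ⟨hze, hz'e⟩
  · simp only [if_pos (Nat.zero_le r), h0]
  · simp only [if_neg (by omega : ¬ (r + 1 ≤ r))]
  · intro t ht1 ht2
    by_cases hc : t ≤ r
    · simp only [if_pos hc]
      exact hz t ht1 hc
    · simp only [if_neg hc]; exact hz'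
  · have hsp : sprod G (r + 1) (fun t => if t < r then ee t else e)
        = sprod G r ee * sprod G 1 (fun _ => e) := by
      apply sprod_glue r 1 _ ee (fun _ => e)
        (fun t ht => by simp only [if_pos ht])
        (fun t ht => by
          have : ¬ (r + t < r) := by omega
          simp only [if_neg this])
    rw [hsp, sprod_one, hs]

lemma ZReach.base {y z : V} (e : E) (hy : f y ≠ 0) (hz : f z = 0)
    (hye : G.sign y e ≠ 0) (hze : G.sign z e ≠ 0) : ZReach G f y (G.edgeSign e) z := by
  refine ⟨hy, 1, (fun t => if t = 0 then y else z), (fun _ => e), le_refl 1, ?_, ?_, ?_, ?_, ?_⟩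
  · intro t ht
    have : t = 0 := by omega
    subst this
    simp only [if_pos rfl, if_neg (by norm_num : (0:ℕ)+1 ≠ 0)]
    exact ⟨hye, hze⟩
  · simp
  · simp
  · intro t ht1 ht2
    have : t = 1 := by omega
    subst this
    simpa using hz
  · unfold sprod; rw [Finset.prod_range_one]

noncomputable def okProd (G : SignedHypergraph V E) (i j : ℕ) (e : ℕ → E) : ℝ :=
  ∏ t ∈ Finset.Ico i j, G.edgeSign (e t)

variable (G f)

/-- ℕ-indexed version of a weak nodal path. -/
def NPath (r : ℕ) (v : ℕ → V) (e : ℕ → E) : Prop :=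
  NWalk G r v e ∧ ∀ i j, i < j → j ≤ r → f (v i) ≠ 0 → f (v j) ≠ 0 →
    (∀ t, i < t → t < j → f (v t) = 0) →
    0 < f (v i) * okProd G i j e * f (v j)

variable {G f}

lemma okProd_zero (p : ℕ) (e : ℕ → E) : okProd G 0 p e = sprod G p e := by
  unfold okProd sprod; rw [Finset.range_eq_Ico]

lemma okProd_congr {i j : ℕ} {e e' : ℕ → E} (h : ∀ t, i ≤ t → t < j → e t = e' t) :
    okProd G i j e = okProd G i j e' := by
  unfold okProd
  exact Finset.prod_congr rfl fun t ht => by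
    rw [h t (Finset.mem_Ico.mp ht).1 (Finset.mem_Ico.mp ht).2]

lemma okProd_shift (p i j : ℕ) (e : ℕ → E) :
    okProd G (p + i) (p + j) e = okProd G i j (fun t => e (p + t)) := by
  unfold okProd
  rw [Finset.prod_Ico_eq_prod_range, Finset.prod_Ico_eq_prod_range]
  have hd : p + j - (p + i) = j - i := by omega
  rw [hd]
  exact Finset.prod_congr rfl fun t _ => by
    have : p + i + t = p + (i + t) := by omega
    rw [this]

lemma finProd_eq_okProd (r : ℕ) (e : ℕ → E) (i j : ℕ) (hj : j ≤ r) :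
    (∏ t : Fin r, if i ≤ (t : ℕ) ∧ (t : ℕ) < j then G.edgeSign (e (t : ℕ)) else 1)
      = okProd G i j e := by
  have h1 : (∏ t : Fin r, if i ≤ (t : ℕ) ∧ (t : ℕ) < j then G.edgeSign (e (t : ℕ)) else 1)
      = ∏ n ∈ Finset.range r, (if i ≤ n ∧ n < j then G.edgeSign (e n) else 1) :=
    Fin.prod_univ_eq_prod_range (fun n => if i ≤ n ∧ n < j then G.edgeSign (e n) else 1) r
  rw [h1, ← Finset.prod_filter]
  unfold okProd
  apply Finset.prod_congr _ fun _ _ => rfl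
  ext n
  simp only [Finset.mem_filter, Finset.mem_range, Finset.mem_Ico]
  omega

lemma okProd_eq_finProd {ℓ : ℕ} (eF : Fin ℓ → E) (EE : ℕ → E)
    (hcomp : ∀ t : Fin ℓ, EE (t : ℕ) = eF t) (i j : ℕ) (hj : j ≤ ℓ) :
    okProd G i j EE = ∏ t : Fin ℓ, if i ≤ (t : ℕ) ∧ (t : ℕ) < j then G.edgeSign (eF t) else 1 := by
  rw [← finProd_eq_okProd ℓ EE i j hj]
  exact Finset.prod_congr rfl fun t _ => by rw [hcomp t]

/-- ℕ-paths yield `wRel`. -/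
lemma NPath.toWRel {r v e} (h : NPath G f r v e) : G.wRel f (v 0) (v r) := by
  right
  refine ⟨r, (fun i : Fin (r + 1) => v (i : ℕ)), (fun t : Fin r => e (t : ℕ)), ⟨?_, ?_⟩, rfl, ?_⟩
  · intro t
    exact h.1 (t : ℕ) t.isLt
  · intro i j hij hfi hfj hbet
    have hij' : (i : ℕ) < (j : ℕ) := hij
    have hjr : (j : ℕ) ≤ r := Nat.lt_succ_iff.mp j.isLt
    have key := h.2 (i : ℕ) (j : ℕ) hij' hjr hfi hfj ?_
    · have hprod : (∏ t : Fin r,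
          if (i : ℕ) ≤ (t : ℕ) ∧ (t : ℕ) < (j : ℕ) then G.edgeSign (e (t : ℕ)) else 1)
            = okProd G (i : ℕ) (j : ℕ) e := finProd_eq_okProd r e _ _ hjr
      rw [hprod]
      exact key
    · intro t ht1 ht2
      exact hbet ⟨t, by omega⟩ ht1 ht2
  · rfl

lemma zlink.toNPath {x y : V} (h : zlink G f x y) :
    ∃ r v e, 1 ≤ r ∧ NPath G f r v e ∧ v 0 = x ∧ v r = y := by
  obtain ⟨hx, hy, r, v, e, hr, hw, h0, hrv, hz, hpos⟩ := h
  refine ⟨r, v, e, hr, ⟨hw, ?_⟩, h0, hrv⟩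
  intro i j hij hjr hfi hfj _
  have hi0 : i = 0 := by
    by_contra hne
    exact hfi (hz i (by omega) (by omega))
  have hjr' : j = r := by
    by_contra hne
    exact hfj (hz j (by omega) (by omega))
  subst hi0; subst hjr'
  rw [okProd_zero, h0, hrv]
  exact hpos

/-- Conversion from `wRel` to ℕ-paths. -/
lemma wRel_toNPath {x y : V} (h : G.wRel f x y) :
    x = y ∨ ∃ r v e, 1 ≤ r ∧ NPath G f r v e ∧ v 0 = x ∧ v r = y := by
  rcases h with rfl | ⟨ℓ, vF, eF, ⟨hinc, hcond⟩, h0, hl⟩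
  · exact Or.inl rfl
  rcases Nat.eq_zero_or_pos ℓ with rfl | hℓ
  · left
    rw [← h0, ← hl]
    congr 1
  · right
    refine ⟨ℓ, (fun n => if h : n ≤ ℓ then vF ⟨n, by omega⟩ else y),
      (fun n => if h : n < ℓ then eF ⟨n, h⟩ else eF ⟨0, hℓ⟩), hℓ, ⟨?_, ?_⟩, ?_, ?_⟩
    · intro t ht
      have h1 : t ≤ ℓ := by omega
      have h2 : t + 1 ≤ ℓ := by omega
      simp only [dif_pos ht, dif_pos h1, dif_pos h2]
      have := hinc ⟨t, ht⟩
      exact this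
    · intro i j hij hjr hfi hfj hbet
      simp only [dif_pos (by omega : i ≤ ℓ), dif_pos hjr] at hfi hfj ⊢
      have key := hcond ⟨i, by omega⟩ ⟨j, by omega⟩ (by exact hij) hfi hfj ?_
      · have hprod : okProd G i j (fun n => if h : n < ℓ then eF ⟨n, h⟩ else eF ⟨0, hℓ⟩)
            = ∏ t : Fin ℓ, if i ≤ (t : ℕ) ∧ (t : ℕ) < j then G.edgeSign (eF t) else 1 :=
          okProd_eq_finProd eF _ (fun t => by simp only [dif_pos t.isLt]) i j hjr
        rw [hprod]
        exact key
      · intro k hk1 hk2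
        have hk : (k : ℕ) ≤ ℓ := Nat.lt_succ_iff.mp k.isLt
        have h9 := hbet (k : ℕ) hk1 hk2
        simp only [dif_pos hk] at h9
        have h10 : f (vF ⟨(k : ℕ), by omega⟩) = 0 := h9
        rwa [Fin.eta] at h10
    · simp only [dif_pos (Nat.zero_le ℓ)]
      rw [← h0]
      exact congrArg vF (Fin.ext (by simp))
    · simp only [dif_pos (le_refl ℓ)]
      rw [← hl]
      exact congrArg vF (Fin.ext (by simp))

/-- Decomposition of an ℕ-path into links. -/
lemma NPath.decomp : ∀ r (v : ℕ → V) (e : ℕ → E), NPath G f r v e → f (v 0) ≠ 0 →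
    f (v r) ≠ 0 → Rel' G f (v 0) (v r) := by
  intro r
  induction r using Nat.strong_induction_on with
  | _ r IH =>
    intro v e hp h0 hr
    rcases Nat.eq_zero_or_pos r with rfl | hrpos
    · exact Relation.ReflTransGen.refl
    have hex : ∃ t, 0 < t ∧ t ≤ r ∧ f (v t) ≠ 0 := ⟨r, hrpos, le_rfl, hr⟩
    set p := Nat.find hex with hpdef
    obtain ⟨hp1, hp2, hp3⟩ := Nat.find_spec hex
    have hmin : ∀ t, 0 < t → t < p → f (v t) = 0 := by
      intro t ht1 ht2
      by_contra hne
      exact (Nat.find_min hex ht2) ⟨ht1, by omega, hne⟩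
    have hz : zlink G f (v 0) (v p) := by
      refine ⟨h0, hp3, p, v, e, hp1, fun t ht => hp.1 t (by omega), rfl, rfl, hmin, ?_⟩
      have := hp.2 0 p hp1 hp2 h0 hp3 (fun t ht1 ht2 => hmin t ht1 ht2)
      rwa [okProd_zero] at this
    have htail : NPath G f (r - p) (fun t => v (p + t)) (fun t => e (p + t)) := by
      constructor
      · intro t ht
        have := hp.1 (p + t) (by omega)
        exact this
      · intro i j hij hjr hfi hfj hbet
        have key := hp.2 (p + i) (p + j) (by omega) (by omega) hfi hfj ?_
        · rwa [okProd_shift] at key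
        · intro t ht1 ht2
          have h9 : f (v (p + (t - p))) = 0 := hbet (t - p) (by omega) (by omega)
          have he : p + (t - p) = t := by omega
          rwa [he] at h9
    have hrec := IH (r - p) (by omega) _ _ htail hp3 ?_
    · have hend : p + (r - p) = r := by omega
      rw [hend] at hrec
      exact Relation.ReflTransGen.head hz hrec
    · show f (v (p + (r - p))) ≠ 0
      have hend : p + (r - p) = r := by omega
      rw [hend]
      exact hr

/-- Gluing a `wRel` with a link. -/
lemma wRel_glue {x b c : V} (hxb : G.wRel f x b) (hbc : zlink G f b c) : G.wRel f x c := by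
  rcases wRel_toNPath hxb with rfl | ⟨r₁, v₁, e₁, hr₁, hp₁, h0, hb⟩
  · obtain ⟨r, v, e, hr, hp, h0, hrv⟩ := hbc.toNPath
    have := hp.toWRel
    rwa [h0, hrv] at this
  · obtain ⟨hfb, hfc, r₂, v₂, e₂, hr₂, hw₂, h02, hr2v, hz₂, hpos⟩ := hbc
    have hj : v₁ r₁ = v₂ 0 := by rw [hb, h02]
    have hw := hp₁.1.concat hw₂ hj
    have hpath : NPath G f (r₁ + r₂) (fun t => if t ≤ r₁ then v₁ t else v₂ (t - r₁))
        (fun t => if t < r₁ then e₁ t else e₂ (t - r₁)) := by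
      refine ⟨hw, ?_⟩
      intro i j hij hjr hfi hfj hbet
      by_cases hcj : j ≤ r₁
      · -- within the first part
        have hfi' : f (v₁ i) ≠ 0 := by
          have h8 : f (if i ≤ r₁ then v₁ i else v₂ (i - r₁)) ≠ 0 := hfi
          rwa [if_pos (by omega : i ≤ r₁)] at h8
        have hfj' : f (v₁ j) ≠ 0 := by
          have h8 : f (if j ≤ r₁ then v₁ j else v₂ (j - r₁)) ≠ 0 := hfj
          rwa [if_pos hcj] at h8
        have key := hp₁.2 i j hij hcj hfi' hfj' ?_
        · show 0 < f (if i ≤ r₁ then v₁ i else v₂ (i - r₁)) *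
            okProd G i j (fun t => if t < r₁ then e₁ t else e₂ (t - r₁)) *
            f (if j ≤ r₁ then v₁ j else v₂ (j - r₁))
          have hok : okProd G i j (fun t => if t < r₁ then e₁ t else e₂ (t - r₁))
              = okProd G i j e₁ :=
            okProd_congr fun t _ ht2 => by rw [if_pos (by omega : t < r₁)]
          rw [if_pos (by omega : i ≤ r₁), if_pos hcj, hok]
          exact key
        · intro t ht1 ht2
          have h9 : f (if t ≤ r₁ then v₁ t else v₂ (t - r₁)) = 0 := hbet t ht1 ht2
          rwa [if_pos (by omega : t ≤ r₁)] at h9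
      · by_cases hci : r₁ ≤ i
        · -- i = r₁ and j = r₁ + r₂
          have hieq : i = r₁ := by
            by_contra hne
            have hz0 : f (v₂ (i - r₁)) = 0 := hz₂ (i - r₁) (by omega) (by omega)
            have h8 : f (if i ≤ r₁ then v₁ i else v₂ (i - r₁)) ≠ 0 := hfi
            rw [if_neg (by omega : ¬ i ≤ r₁)] at h8
            exact h8 hz0
          have hjeq : j = r₁ + r₂ := by
            by_contra hne
            have hz0 : f (v₂ (j - r₁)) = 0 := hz₂ (j - r₁) (by omega) (by omega)
            have h8 : f (if j ≤ r₁ then v₁ j else v₂ (j - r₁)) ≠ 0 := hfj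
            rw [if_neg (by omega : ¬ j ≤ r₁)] at h8
            exact h8 hz0
          show 0 < f (if i ≤ r₁ then v₁ i else v₂ (i - r₁)) *
            okProd G i j (fun t => if t < r₁ then e₁ t else e₂ (t - r₁)) *
            f (if j ≤ r₁ then v₁ j else v₂ (j - r₁))
          have hvi : (if i ≤ r₁ then v₁ i else v₂ (i - r₁)) = b := by
            rw [hieq, if_pos le_rfl, hb]
          have hvj : (if j ≤ r₁ then v₁ j else v₂ (j - r₁)) = c := by
            rw [hjeq, if_neg (by omega : ¬ r₁ + r₂ ≤ r₁)]
            have h7 : r₁ + r₂ - r₁ = r₂ := by omega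
            rw [h7, hr2v]
          have hok : okProd G i j (fun t => if t < r₁ then e₁ t else e₂ (t - r₁))
              = sprod G r₂ e₂ := by
            rw [hieq, hjeq]
            have h1 : okProd G (r₁ + 0) (r₁ + r₂) (fun t => if t < r₁ then e₁ t else e₂ (t - r₁))
                = okProd G 0 r₂ (fun t => if r₁ + t < r₁ then e₁ (r₁ + t) else e₂ (r₁ + t - r₁)) :=
              okProd_shift r₁ 0 r₂ _
            rw [show r₁ + 0 = r₁ from rfl] at h1
            rw [h1, okProd_zero]
            unfold sprod
            exact Finset.prod_congr rfl fun t _ => by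
              show G.edgeSign (if r₁ + t < r₁ then e₁ (r₁ + t) else e₂ (r₁ + t - r₁))
                = G.edgeSign (e₂ t)
              rw [if_neg (by omega : ¬ r₁ + t < r₁)]
              have h7 : r₁ + t - r₁ = t := by omega
              rw [h7]
          rw [hvi, hvj, hok]
          exact hpos
        · -- i < r₁ < j : vacuous since b is nonzero strictly between
          exfalso
          have h9 : f (if r₁ ≤ r₁ then v₁ r₁ else v₂ (r₁ - r₁)) = 0 :=
            hbet r₁ (by omega) (by omega)
          rw [if_pos le_rfl, hb] at h9
          exact hfb h9
    have hfin := hpath.toWRel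
    have he0 : (if (0:ℕ) ≤ r₁ then v₁ 0 else v₂ (0 - r₁)) = x := by
      rw [if_pos (Nat.zero_le r₁), h0]
    have heL : (if r₁ + r₂ ≤ r₁ then v₁ (r₁ + r₂) else v₂ (r₁ + r₂ - r₁)) = c := by
      rw [if_neg (by omega : ¬ r₁ + r₂ ≤ r₁)]
      have h7 : r₁ + r₂ - r₁ = r₂ := by omega
      rw [h7, hr2v]
    rw [he0, heL] at hfin
    exact hfin

lemma wRel_of_rel' {x y : V} (h : Rel' G f x y) : G.wRel f x y := by
  induction h with
  | refl => exact Or.inl rfl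
  | tail _ hbc ih => exact wRel_glue ih hbc

lemma rel'_of_wRel {x y : V} (h : G.wRel f x y) (hx : f x ≠ 0) (hy : f y ≠ 0) :
    Rel' G f x y := by
  rcases wRel_toNPath h with rfl | ⟨r, v, e, _, hp, h0, hrv⟩
  · exact Relation.ReflTransGen.refl
  · have := NPath.decomp r v e hp (h0 ▸ hx) (hrv ▸ hy)
    rwa [h0, hrv] at this

variable (G f)

/-- The weak nodal class of a vertex. -/
def cls (w : V) : Set V := {y | f y ≠ 0 ∧ Rel' G f w y}

/-- The set of weak nodal classes. -/
def classSet : Set (Set V) := {C | ∃ w, f w ≠ 0 ∧ C = cls G f w}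

/-- The adjacency relation used in `componentsOn univ ⊤`. -/
def AdjRel0 : V → V → Prop := fun x y =>
  x ∈ (Finset.univ : Finset V) ∧ y ∈ (Finset.univ : Finset V) ∧
    ∃ e, True ∧ G.sign x e ≠ 0 ∧ G.sign y e ≠ 0

def compOf (v : V) : Set V :=
  {u | u ∈ (Finset.univ : Finset V) ∧ Relation.ReflTransGen (AdjRel0 G) v u}

def compSet : Set (Set V) :=
  {C | ∃ v ∈ (Finset.univ : Finset V), C = compOf G v}

variable {G f}

lemma componentsOn_eq : G.componentsOn Finset.univ (fun _ => True) = (compSet G).ncard := rfl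

lemma mem_cls_self {w : V} (hw : f w ≠ 0) : w ∈ cls G f w :=
  ⟨hw, Relation.ReflTransGen.refl⟩

lemma cls_eq_of_rel' {w y : V} (hr : Rel' G f w y) : cls G f w = cls G f y := by
  ext z
  exact ⟨fun ⟨hz, h⟩ => ⟨hz, Rel'_trans (Rel'_symm hr) h⟩,
    fun ⟨hz, h⟩ => ⟨hz, Rel'_trans hr h⟩⟩

lemma weakDomainCount_eq : G.weakDomainCount f = (classSet G f).ncard := by
  classical
  set Ψ : Set V → Set V := fun C => {x | ∃ y ∈ C, G.wRel f x y} with hΨ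
  have step1 : ∀ w, f w ≠ 0 → Ψ (cls G f w) = G.weakDomain f w := by
    intro w hw
    ext x
    constructor
    · rintro ⟨y, ⟨hy, hr⟩, hxr⟩
      exact ⟨y, hy, wRel_of_rel' hr, hxr⟩
    · rintro ⟨y, hy, hwy, hxy⟩
      exact ⟨y, ⟨hy, rel'_of_wRel hwy hw hy⟩, hxy⟩
  set Φ : Set V → Set V := fun D => {x | x ∈ D ∧ f x ≠ 0} with hΦ
  have step2 : ∀ w, f w ≠ 0 → Φ (G.weakDomain f w) = cls G f w := by
    intro w hw
    ext x
    constructor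
    · rintro ⟨⟨y, hy, hwy, hxy⟩, hx⟩
      exact ⟨hx, Rel'_trans (rel'_of_wRel hwy hw hy) (Rel'_symm (rel'_of_wRel hxy hx hy))⟩
    · rintro ⟨hx, hr⟩
      exact ⟨⟨x, hx, wRel_of_rel' hr, Or.inl rfl⟩, hx⟩
  have himg : {D : Set V | G.IsWeakNodalDomain f D} = Ψ '' (classSet G f) := by
    ext D
    constructor
    · rintro ⟨w, hw, rfl⟩
      exact ⟨cls G f w, ⟨w, hw, rfl⟩, step1 w hw⟩
    · rintro ⟨C, ⟨w, hw, rfl⟩, rfl⟩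
      exact ⟨w, hw, step1 w hw⟩
  have hinj : Set.InjOn Ψ (classSet G f) := by
    rintro C₁ ⟨w₁, hw₁, rfl⟩ C₂ ⟨w₂, hw₂, rfl⟩ heq
    have h1 : Φ (Ψ (cls G f w₁)) = cls G f w₁ := by rw [step1 w₁ hw₁, step2 w₁ hw₁]
    have h2 : Φ (Ψ (cls G f w₂)) = cls G f w₂ := by rw [step1 w₂ hw₂, step2 w₂ hw₂]
    rw [← h1, ← h2, heq]
  show Set.ncard {D : Set V | G.IsWeakNodalDomain f D} = _
  rw [himg, Set.ncard_image_of_injOn hinj]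

lemma adjRel0_symm {x y : V} (h : AdjRel0 G x y) : AdjRel0 G y x := by
  obtain ⟨_, _, e, _, h1, h2⟩ := h
  exact ⟨Finset.mem_univ _, Finset.mem_univ _, e, trivial, h2, h1⟩

lemma rtg_adjRel0_symm {x y : V} (h : Relation.ReflTransGen (AdjRel0 G) x y) :
    Relation.ReflTransGen (AdjRel0 G) y x := by
  induction h with
  | refl => exact Relation.ReflTransGen.refl
  | tail _ hbc ih => exact Relation.ReflTransGen.head (adjRel0_symm hbc) ih

lemma compOf_eq_of_rtg {v u : V} (h : Relation.ReflTransGen (AdjRel0 G) v u) :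
    compOf G v = compOf G u := by
  ext z
  exact ⟨fun ⟨hz, h2⟩ => ⟨hz, Relation.ReflTransGen.trans (rtg_adjRel0_symm h) h2⟩,
    fun ⟨hz, h2⟩ => ⟨hz, Relation.ReflTransGen.trans h h2⟩⟩

lemma NWalk.toRTG : ∀ {r : ℕ} {v : ℕ → V} {e : ℕ → E}, NWalk G r v e →
    Relation.ReflTransGen (AdjRel0 G) (v 0) (v r) := by
  intro r
  induction r with
  | zero => intro v e _; exact Relation.ReflTransGen.refl
  | succ n IH =>
    intro v e h
    have hstep : AdjRel0 G (v n) (v (n + 1)) := by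
      obtain ⟨h1, h2⟩ := h n (by omega)
      exact ⟨Finset.mem_univ _, Finset.mem_univ _, e n, trivial, h1, h2⟩
    exact Relation.ReflTransGen.tail (IH (fun t ht => h t (by omega))) hstep

lemma rel'_toRTG {x y : V} (h : Rel' G f x y) :
    Relation.ReflTransGen (AdjRel0 G) x y := by
  induction h with
  | refl => exact Relation.ReflTransGen.refl
  | tail _ hbc ih =>
    obtain ⟨_, _, r, v, e, _, hw, h0, hrv, _, _⟩ := hbc
    exact Relation.ReflTransGen.trans ih (h0 ▸ hrv ▸ hw.toRTG)

lemma zreach_toRTG {y : V} {s : ℝ} {z : V} (h : ZReach G f y s z) :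
    Relation.ReflTransGen (AdjRel0 G) y z := by
  obtain ⟨_, r, v, e, _, hw, h0, hrv, _, _⟩ := h
  exact h0 ▸ hrv ▸ hw.toRTG

/-! ### Linear algebra lemmas -/

lemma adj_symm (x y : V) : G.adj x y = G.adj y x := by
  unfold SignedHypergraph.adj
  simp only [Matrix.of_apply]
  by_cases h : x = y
  · rw [if_pos h, if_pos h.symm]
  · rw [if_neg h, if_neg (Ne.symm h)]
    apply Finset.sum_congr _ fun _ _ => rfl
    ext e
    simp only [Finset.mem_filter, Finset.mem_univ, true_and]
    tauto

lemma adj_eq_zero_of_deg_eq_zero {x : V} (h : G.deg x = 0) (y : V) : G.adj x y = 0 := by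
  unfold SignedHypergraph.adj
  simp only [Matrix.of_apply]
  by_cases hxy : x = y
  · rw [if_pos hxy]
  · rw [if_neg hxy]
    apply Finset.sum_eq_zero
    intro e he
    exfalso
    have hmem : e ∈ Finset.univ.filter fun e : E => G.sign x e ≠ 0 := by
      simp only [Finset.mem_filter, Finset.mem_univ, true_and]
      exact (Finset.mem_filter.mp he).2.1
    rw [Finset.card_eq_zero.mp h] at hmem
    exact absurd hmem (Finset.notMem_empty e)

lemma lap_mulVec (u : V → ℝ) (x : V) :
    G.lap.mulVec u x = u x - (∑ y, G.adj x y * u y) / (G.deg x : ℝ) := by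
  unfold SignedHypergraph.lap Matrix.mulVec dotProduct
  simp only [Matrix.of_apply]
  rw [Finset.sum_congr rfl (fun y _ => sub_mul ((if x = y then (1:ℝ) else 0)) _ (u y)),
    Finset.sum_sub_distrib]
  congr 1
  · simp [Finset.sum_ite_eq, Finset.mem_univ]
  · rw [Finset.sum_div]
    apply Finset.sum_congr rfl
    intro y _
    ring

lemma eigen_pointwise {lam : ℝ} {u : V → ℝ} (h : G.lap.mulVec u = lam • u) (x : V) :
    ∑ y, G.adj x y * u y = (1 - lam) * (G.deg x : ℝ) * u x := by
  have hx := congrFun h x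
  rw [lap_mulVec] at hx
  simp only [Pi.smul_apply, smul_eq_mul] at hx
  by_cases hd : (G.deg x : ℝ) = 0
  · have hdn : G.deg x = 0 := by exact_mod_cast hd
    rw [hd]
    rw [Finset.sum_eq_zero fun y _ => by rw [adj_eq_zero_of_deg_eq_zero hdn y, zero_mul]]
    ring
  · have h2 : (∑ y, G.adj x y * u y) / (G.deg x : ℝ) = (1 - lam) * u x := by linarith
    have h3 := (div_eq_iff hd).mp h2
    rw [h3]; ring

lemma dInner_comm (u w : V → ℝ) : dInner G u w = dInner G w u := by
  unfold SignedHypergraph.dInner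
  exact Finset.sum_congr rfl fun v _ => by ring

lemma dInner_self_nonneg (u : V → ℝ) : 0 ≤ dInner G u u :=
  Finset.sum_nonneg fun v _ => by
    have : (G.deg v : ℝ) * u v * u v = (G.deg v : ℝ) * (u v)^2 := by ring
    rw [this]
    positivity

lemma dInner_self_eq_zero {u : V → ℝ} (h : dInner G u u = 0) {x : V} (hx : G.deg x ≠ 0) :
    u x = 0 := by
  have hterm : ∀ v ∈ Finset.univ, (0:ℝ) ≤ (G.deg v : ℝ) * u v * u v := fun v _ => by
    have : (G.deg v : ℝ) * u v * u v = (G.deg v : ℝ) * (u v)^2 := by ring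
    rw [this]; positivity
  have := (Finset.sum_eq_zero_iff_of_nonneg hterm).mp h x (Finset.mem_univ x)
  have hdx : (0:ℝ) < (G.deg x : ℝ) := by
    have h0 : 0 < G.deg x := Nat.pos_of_ne_zero hx
    exact_mod_cast h0
  rcases mul_eq_zero.mp this with h5 | h5
  · rcases mul_eq_zero.mp h5 with h6 | h6
    · exact absurd h6 (ne_of_gt hdx)
    · exact h6
  · exact h5

lemma dInner_sum_right {ι : Type*} (s : Finset ι) (u : V → ℝ) (g : ι → V → ℝ) :
    dInner G u (fun v => ∑ i ∈ s, g i v) = ∑ i ∈ s, dInner G u (g i) := by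
  unfold SignedHypergraph.dInner
  rw [Finset.sum_comm]
  apply Finset.sum_congr rfl
  intro v _
  rw [Finset.mul_sum]

lemma dInner_smul_right (a : ℝ) (u w : V → ℝ) :
    dInner G u (fun v => a * w v) = a * dInner G u w := by
  unfold SignedHypergraph.dInner
  rw [Finset.mul_sum]
  exact Finset.sum_congr rfl fun v _ => by ring

lemma dInner_lap (u w : V → ℝ) :
    dInner G u (G.lap.mulVec w) = dInner G u w - ∑ x, ∑ y, u x * G.adj x y * w y := by
  unfold SignedHypergraph.dInner
  rw [← Finset.sum_sub_distrib]
  apply Finset.sum_congr rfl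
  intro x _
  rw [lap_mulVec]
  have hS : (G.deg x : ℝ) * ((∑ y, G.adj x y * w y) / (G.deg x : ℝ)) = ∑ y, G.adj x y * w y := by
    by_cases hd : (G.deg x : ℝ) = 0
    · have hdn : G.deg x = 0 := by exact_mod_cast hd
      rw [hd, zero_mul]
      exact (Finset.sum_eq_zero fun y _ => by
        rw [adj_eq_zero_of_deg_eq_zero hdn y, zero_mul]).symm
    · field_simp
  calc (G.deg x : ℝ) * u x * (w x - (∑ y, G.adj x y * w y) / (G.deg x : ℝ))
      = (G.deg x : ℝ) * u x * w x
        - u x * ((G.deg x : ℝ) * ((∑ y, G.adj x y * w y) / (G.deg x : ℝ))) := by ring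
    _ = (G.deg x : ℝ) * u x * w x - u x * ∑ y, G.adj x y * w y := by rw [hS]
    _ = (G.deg x : ℝ) * u x * w x - ∑ y, u x * G.adj x y * w y := by
        rw [Finset.mul_sum]
        congr 1
        exact Finset.sum_congr rfl fun y _ => by ring

/-- The fundamental quadratic identity for a class-constant multiplier. -/
lemma T_formula {lam : ℝ} (hf : G.lap.mulVec f = lam • f) (c : V → ℝ) :
    lam * dInner G (fun v => c v * f v) (fun v => c v * f v)
      - dInner G (fun v => c v * f v) (G.lap.mulVec (fun v => c v * f v))
    = ∑ x, ∑ y, (-(1/2)) * (G.adj x y * f x * f y) * (c x - c y)^2 := by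
  rw [dInner_lap]
  have hkey : ∀ x : V,
      (lam - 1) * ((G.deg x : ℝ) * (c x * f x) * (c x * f x))
        + ∑ y, (c x * f x) * G.adj x y * (c y * f y)
      = ∑ y, G.adj x y * f x * f y * (c x * c y - (c x)^2) := by
    intro x
    have he := eigen_pointwise hf x
    have h1 : (lam - 1) * ((G.deg x : ℝ) * (c x * f x) * (c x * f x))
        = -((c x)^2 * f x * ((1 - lam) * (G.deg x : ℝ) * f x)) := by ring
    rw [h1, ← he, Finset.mul_sum, ← Finset.sum_neg_distrib, ← Finset.sum_add_distrib]
    exact Finset.sum_congr rfl fun y _ => by ring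
  set g : V → ℝ := fun v => c v * f v with hg
  have e1 : lam * dInner G g g - (dInner G g g - ∑ x, ∑ y, g x * G.adj x y * g y)
      = (lam - 1) * dInner G g g + ∑ x, ∑ y, g x * G.adj x y * g y := by ring
  rw [e1]
  have e2 : (lam - 1) * dInner G g g
      = ∑ x, (lam - 1) * ((G.deg x : ℝ) * (c x * f x) * (c x * f x)) := by
    unfold SignedHypergraph.dInner
    rw [Finset.mul_sum]
  have e3 : ∑ x, ∑ y, g x * G.adj x y * g y
      = ∑ x, ∑ y, (c x * f x) * G.adj x y * (c y * f y) := rfl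
  rw [e2, e3, ← Finset.sum_add_distrib,
    Finset.sum_congr rfl fun x _ => hkey x]
  have h2 : ∑ x, ∑ y, G.adj x y * f x * f y * (c x * c y - (c x)^2)
      = ∑ x, ∑ y, ((-(1/2)) * (G.adj x y * f x * f y) * (c x - c y)^2
          + (1/2) * (G.adj x y * f x * f y * (c y)^2)
          - (1/2) * (G.adj x y * f x * f y * (c x)^2)) :=
    Finset.sum_congr rfl fun x _ => Finset.sum_congr rfl fun y _ => by ring
  rw [h2]
  simp only [Finset.sum_add_distrib, Finset.sum_sub_distrib]
  have h3 : ∑ x, ∑ y, (1/2 : ℝ) * (G.adj x y * f x * f y * (c y)^2)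
      = ∑ x, ∑ y, (1/2 : ℝ) * (G.adj x y * f x * f y * (c x)^2) := by
    rw [Finset.sum_comm]
    exact Finset.sum_congr rfl fun x _ => Finset.sum_congr rfl fun y _ => by
      rw [adj_symm]; ring
  rw [h3]
  ring

/-! ### Sign lemmas across classes -/

lemma cross_edge_neg {x y : V} (hx : f x ≠ 0) (hy : f y ≠ 0) (hnr : ¬ Rel' G f x y)
    {e : E} (hxe : G.sign x e ≠ 0) (hye : G.sign y e ≠ 0) :
    G.edgeSign e * f x * f y < 0 := by
  rcases lt_trichotomy (G.edgeSign e * f x * f y) 0 with h | h | h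
  · exact h
  · exact absurd h (by
      exact mul_ne_zero (mul_ne_zero (edgeSign_ne_zero G e) hx) hy)
  · exact absurd (Relation.ReflTransGen.single
      (zlink_of_edge e hx hy hxe hye (by nlinarith))) hnr

lemma cross_adj_nonpos {x y : V} (hx : f x ≠ 0) (hy : f y ≠ 0) (hnr : ¬ Rel' G f x y) :
    G.adj x y * f x * f y ≤ 0 := by
  have hxy : x ≠ y := fun h => hnr (h ▸ Relation.ReflTransGen.refl)
  show (G.adj : Matrix V V ℝ) x y * f x * f y ≤ 0
  unfold SignedHypergraph.adj
  simp only [Matrix.of_apply, if_neg hxy]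
  rw [Finset.sum_mul, Finset.sum_mul]
  apply Finset.sum_nonpos
  intro e he
  simp only [Finset.mem_filter] at he
  exact le_of_lt (cross_edge_neg hx hy hnr he.2.1 he.2.2)

lemma cross_adj_neg {x y : V} (hx : f x ≠ 0) (hy : f y ≠ 0) (hnr : ¬ Rel' G f x y)
    {e : E} (hxe : G.sign x e ≠ 0) (hye : G.sign y e ≠ 0) :
    G.adj x y * f x * f y < 0 := by
  have hxy : x ≠ y := fun h => hnr (h ▸ Relation.ReflTransGen.refl)
  show (G.adj : Matrix V V ℝ) x y * f x * f y < 0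
  unfold SignedHypergraph.adj
  simp only [Matrix.of_apply, if_neg hxy]
  rw [Finset.sum_mul, Finset.sum_mul]
  apply Finset.sum_neg
  · intro e' he'
    simp only [Finset.mem_filter] at he'
    exact cross_edge_neg hx hy hnr he'.2.1 he'.2.2
  · exact ⟨e, by simp only [Finset.mem_filter, Finset.mem_univ, true_and]; exact ⟨hxe, hye⟩⟩

lemma Tterm_nonneg {c : V → ℝ}
    (hc : ∀ x y, f x ≠ 0 → f y ≠ 0 → Rel' G f x y → c x = c y) (x y : V) :
    0 ≤ (-(1/2)) * (G.adj x y * f x * f y) * (c x - c y)^2 := by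
  by_cases hx : f x = 0
  · exact le_of_eq (by rw [hx]; ring)
  by_cases hy : f y = 0
  · exact le_of_eq (by rw [hy]; ring)
  by_cases hr : Rel' G f x y
  · exact le_of_eq (by rw [hc x y hx hy hr]; ring)
  · have h1 := cross_adj_nonpos hx hy hr
    nlinarith [sq_nonneg (c x - c y)]

lemma T_zero_extract {c : V → ℝ}
    (hc : ∀ x y, f x ≠ 0 → f y ≠ 0 → Rel' G f x y → c x = c y)
    (hT : ∑ x, ∑ y, (-(1/2)) * (G.adj x y * f x * f y) * (c x - c y)^2 = 0) :
    ∀ x y, f x ≠ 0 → f y ≠ 0 → (∃ e, G.sign x e ≠ 0 ∧ G.sign y e ≠ 0) → c x = c y := by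
  have houter : ∀ x ∈ Finset.univ,
      (0:ℝ) ≤ ∑ y, (-(1/2)) * (G.adj x y * f x * f y) * (c x - c y)^2 :=
    fun x _ => Finset.sum_nonneg fun y _ => Tterm_nonneg hc x y
  have hterm : ∀ x y, (-(1/2)) * (G.adj x y * f x * f y) * (c x - c y)^2 = 0 := by
    intro x y
    have h1 := (Finset.sum_eq_zero_iff_of_nonneg houter).mp hT x (Finset.mem_univ x)
    exact (Finset.sum_eq_zero_iff_of_nonneg
      (fun y _ => Tterm_nonneg hc x y)).mp h1 y (Finset.mem_univ y)
  intro x y hx hy ⟨e, hxe, hye⟩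
  by_cases hr : Rel' G f x y
  · exact hc x y hx hy hr
  · have h2 := cross_adj_neg hx hy hr hxe hye
    have h3 := hterm x y
    have h4 : (c x - c y)^2 = 0 := by
      rcases mul_eq_zero.mp h3 with h5 | h5
      · exfalso
        rcases mul_eq_zero.mp h5 with h6 | h6
        · norm_num at h6
        · rw [h6] at h2; norm_num at h2
      · exact h5
    have h5 : c x - c y = 0 := by
      exact pow_eq_zero_iff (by norm_num) |>.mp h4
    linarith

/-! ### The eigenbasis analysis -/

lemma Q_symm (u w : V → ℝ) :
    ∑ x, ∑ y, u x * G.adj x y * w y = ∑ x, ∑ y, w x * G.adj x y * u y := by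
  rw [Finset.sum_comm]
  exact Finset.sum_congr rfl fun x _ => Finset.sum_congr rfl fun y _ => by
    rw [adj_symm]; ring

lemma S_analysis (hnv : 0 < Fintype.card V)
    (lam : Fin (Fintype.card V) → ℝ) (Φ : Fin (Fintype.card V) → V → ℝ)
    (hmono : Monotone lam) (heig : ∀ i, G.lap.mulVec (Φ i) = lam i • Φ i)
    (hli : LinearIndependent ℝ Φ)
    (k : Fin (Fintype.card V)) (g : V → ℝ)
    (horth : ∀ j, j < k → dInner G g (Φ j) = 0)
    (hSle : dInner G g (G.lap.mulVec g) - lam k * dInner G g g ≤ 0) :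
    dInner G g (G.lap.mulVec g) - lam k * dInner G g g = 0 ∧
      (∀ x, G.deg x ≠ 0 → G.lap.mulVec g x = lam k * g x) := by
  classical
  haveI : Nonempty (Fin (Fintype.card V)) := ⟨⟨0, hnv⟩⟩
  have hcard : Fintype.card (Fin (Fintype.card V)) = Module.finrank ℝ (V → ℝ) := by
    rw [Fintype.card_fin, Module.finrank_fintype_fun_eq_card]
  set b := basisOfLinearIndependentOfCardEqFinrank hli hcard with hb
  have hbco : ⇑b = Φ := coe_basisOfLinearIndependentOfCardEqFinrank hli hcard
  set d : Fin (Fintype.card V) → ℝ := fun j => b.repr g j with hd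
  have hgrepr : ∀ v, g v = ∑ j, d j * Φ j v := by
    intro v
    have h1 := b.sum_repr g
    rw [hbco] at h1
    have h2 := congrFun h1 v
    rw [Finset.sum_apply] at h2
    rw [← h2]
    rfl
  -- the weighted Gram matrix is block diagonal w.r.t. eigenvalues
  have hW : ∀ j j', lam j ≠ lam j' → dInner G (Φ j) (Φ j') = 0 := by
    intro j j' hne
    have h1 : dInner G (Φ j) (G.lap.mulVec (Φ j')) = lam j' * dInner G (Φ j) (Φ j') := by
      rw [heig j']
      exact dInner_smul_right (lam j') (Φ j) (Φ j')
    have h2 : dInner G (Φ j') (G.lap.mulVec (Φ j)) = lam j * dInner G (Φ j') (Φ j) := by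
      rw [heig j]
      exact dInner_smul_right (lam j) (Φ j') (Φ j)
    rw [dInner_lap] at h1 h2
    have h3 := Q_symm (G := G) (Φ j) (Φ j')
    have h4 := dInner_comm (G := G) (Φ j) (Φ j')
    have h5 : lam j' * dInner G (Φ j) (Φ j') = lam j * dInner G (Φ j) (Φ j') := by
      rw [h4] at h1 ⊢
      linarith [h1, h2, h3, h4]
    rcases mul_eq_zero.mp (by linarith : (lam j' - lam j) * dInner G (Φ j) (Φ j') = 0) with h | h
    · exact absurd (by linarith : lam j = lam j') hne
    · exact h
  set values := Finset.univ.image lam with hvalues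
  set q : ℝ → (V → ℝ) :=
    fun μ v => ∑ j ∈ Finset.univ.filter (fun j => lam j = μ), d j * Φ j v with hqdef
  have hexp : ∀ u : V → ℝ, dInner G u (fun v => ∑ j, d j * Φ j v)
      = ∑ j, d j * dInner G u (Φ j) := by
    intro u
    rw [dInner_sum_right Finset.univ u (fun j v => d j * Φ j v)]
    exact Finset.sum_congr rfl fun j _ => dInner_smul_right (d j) u (Φ j)
  have hexpq : ∀ (μ : ℝ) (u : V → ℝ), dInner G u (q μ)
      = ∑ j ∈ Finset.univ.filter (fun j => lam j = μ), d j * dInner G u (Φ j) := by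
    intro μ u
    rw [show q μ = fun v => ∑ j ∈ Finset.univ.filter (fun j => lam j = μ), d j * Φ j v from rfl,
      dInner_sum_right _ u (fun j v => d j * Φ j v)]
    exact Finset.sum_congr rfl fun j _ => dInner_smul_right (d j) u (Φ j)
  -- dInner g (q μ) = dInner (q μ) (q μ)
  have hinner_q : ∀ μ, dInner G g (q μ) = dInner G (q μ) (q μ) := by
    intro μ
    have hg_as : dInner G (q μ) g = ∑ j, d j * dInner G (q μ) (Φ j) := by
      rw [show g = fun v => ∑ j, d j * Φ j v from funext hgrepr]
      exact hexp (q μ)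
    have hsplit : ∑ j, d j * dInner G (q μ) (Φ j)
        = ∑ j ∈ Finset.univ.filter (fun j => lam j = μ), d j * dInner G (q μ) (Φ j) := by
      rw [← Finset.sum_filter_add_sum_filter_not Finset.univ (fun j => lam j = μ)]
      have hzero : ∑ j ∈ Finset.univ.filter (fun j => ¬ lam j = μ),
          d j * dInner G (q μ) (Φ j) = 0 := by
        apply Finset.sum_eq_zero
        intro j hj
        simp only [Finset.mem_filter] at hj
        have h0 : dInner G (q μ) (Φ j) = 0 := by
          rw [dInner_comm, hexpq μ (Φ j)]
          apply Finset.sum_eq_zero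
          intro j' hj'
          simp only [Finset.mem_filter] at hj'
          rw [dInner_comm, hW j' j (by rw [hj'.2]; exact fun h => hj.2 h.symm), mul_zero]
        rw [h0, mul_zero]
      rw [hzero, add_zero]
    rw [dInner_comm, hg_as, hsplit, ← hexpq μ (q μ)]
  -- expansion of L g
  have hsumg : ∑ j, d j • Φ j = g := by
    have h1 := b.sum_repr g
    rw [hbco] at h1
    exact h1
  have hLg : ∀ v, G.lap.mulVec g v = ∑ j, d j * lam j * Φ j v := by
    intro v
    have h2 : G.lap.mulVec (∑ j, d j • Φ j) = ∑ j, d j • G.lap.mulVec (Φ j) := by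
      rw [← Matrix.mulVecLin_apply, map_sum]
      exact Finset.sum_congr rfl fun j _ => by
        rw [_root_.map_smul, Matrix.mulVecLin_apply]
    rw [← hsumg, h2]
    rw [Finset.sum_apply]
    apply Finset.sum_congr rfl
    intro j _
    rw [heig j]
    simp only [Pi.smul_apply, smul_eq_mul]
    ring
  have hIg : dInner G g (G.lap.mulVec g) = ∑ j, d j * lam j * dInner G g (Φ j) := by
    rw [show G.lap.mulVec g = fun v => ∑ j, (d j * lam j) * Φ j v from funext fun v => hLg v]
    rw [dInner_sum_right _ g (fun j v => (d j * lam j) * Φ j v)]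
    exact Finset.sum_congr rfl fun j _ => dInner_smul_right _ g (Φ j)
  have hGg : dInner G g g = ∑ j, d j * dInner G g (Φ j) := by
    have h7 := hexp g
    rw [show (fun v => ∑ j, d j * Φ j v) = g from (funext hgrepr).symm] at h7
    exact h7
  have hS : dInner G g (G.lap.mulVec g) - lam k * dInner G g g
      = ∑ μ ∈ values, (μ - lam k) * dInner G (q μ) (q μ) := by
    rw [hIg, hGg, Finset.mul_sum, ← Finset.sum_sub_distrib]
    have hstep : ∑ j, (d j * lam j * dInner G g (Φ j) - lam k * (d j * dInner G g (Φ j)))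
        = ∑ j, d j * (lam j - lam k) * dInner G g (Φ j) :=
      Finset.sum_congr rfl fun j _ => by ring
    rw [hstep]
    rw [← Finset.sum_fiberwise_of_maps_to
      (fun j _ => Finset.mem_image_of_mem lam (Finset.mem_univ j))
      (fun j => d j * (lam j - lam k) * dInner G g (Φ j))]
    apply Finset.sum_congr rfl
    intro μ _
    rw [← hinner_q μ, hexpq μ g, Finset.mul_sum]
    apply Finset.sum_congr rfl
    intro j hj
    rw [(Finset.mem_filter.mp hj).2]
    ring
  have hterm0 : ∀ μ ∈ values, μ < lam k → dInner G (q μ) (q μ) = 0 := by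
    intro μ _ hlt
    rw [← hinner_q μ, hexpq μ g]
    apply Finset.sum_eq_zero
    intro j hj
    have hj2 := (Finset.mem_filter.mp hj).2
    have hjk : j < k := by
      by_contra hge
      have h6 : lam k ≤ lam j := hmono (not_lt.mp hge)
      rw [hj2] at h6; linarith
    rw [horth j hjk, mul_zero]
  have hnonneg : ∀ μ ∈ values, 0 ≤ (μ - lam k) * dInner G (q μ) (q μ) := by
    intro μ hμ
    rcases lt_trichotomy μ (lam k) with h | h | h
    · rw [hterm0 μ hμ h, mul_zero]
    · rw [h]; simp
    · exact mul_nonneg (by linarith) (dInner_self_nonneg _)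
  have hSzero : dInner G g (G.lap.mulVec g) - lam k * dInner G g g = 0 :=
    le_antisymm hSle (hS ▸ Finset.sum_nonneg hnonneg)
  have hallzero : ∀ μ ∈ values, (μ - lam k) * dInner G (q μ) (q μ) = 0 :=
    (Finset.sum_eq_zero_iff_of_nonneg hnonneg).mp (by rw [← hS]; exact hSzero)
  have hqzero : ∀ μ ∈ values, μ ≠ lam k → ∀ x, G.deg x ≠ 0 → q μ x = 0 := by
    intro μ hμ hne x hx
    have h1 : dInner G (q μ) (q μ) = 0 := by
      rcases lt_trichotomy μ (lam k) with h | h | h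
      · exact hterm0 μ hμ h
      · exact absurd h hne
      · rcases mul_eq_zero.mp (hallzero μ hμ) with h2 | h2
        · exact absurd (by linarith : μ = lam k) hne
        · exact h2
    exact dInner_self_eq_zero h1 hx
  refine ⟨hSzero, ?_⟩
  intro x hx
  have hdiff : G.lap.mulVec g x - lam k * g x = ∑ μ ∈ values, (μ - lam k) * q μ x := by
    rw [hLg x, hgrepr x, Finset.mul_sum, ← Finset.sum_sub_distrib]
    have hstep : ∑ j, (d j * lam j * Φ j x - lam k * (d j * Φ j x))
        = ∑ j, d j * (lam j - lam k) * Φ j x :=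
      Finset.sum_congr rfl fun j _ => by ring
    rw [hstep]
    rw [← Finset.sum_fiberwise_of_maps_to
      (fun j _ => Finset.mem_image_of_mem lam (Finset.mem_univ j))
      (fun j => d j * (lam j - lam k) * Φ j x)]
    apply Finset.sum_congr rfl
    intro μ _
    rw [show q μ x = ∑ j ∈ Finset.univ.filter (fun j => lam j = μ), d j * Φ j x from rfl,
      Finset.mul_sum]
    apply Finset.sum_congr rfl
    intro j hj
    rw [(Finset.mem_filter.mp hj).2]
    ring
  have hzero : ∑ μ ∈ values, (μ - lam k) * q μ x = 0 := by
    apply Finset.sum_eq_zero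
    intro μ hμ
    by_cases h : μ = lam k
    · rw [h, sub_self, zero_mul]
    · rw [hqzero μ hμ h x hx, mul_zero]
  linarith [hdiff, hzero]

/-! ### Propagation through zeros -/

lemma three_neg {a b c : ℝ} (h1 : a * b < 0) (h2 : a * c < 0) (h3 : b * c < 0) : False := by
  nlinarith [mul_pos_of_neg_of_neg h1 h2, sq_nonneg a, h3, sq_nonneg (a * b * c)]

lemma ZReach.s_ne_zero {y : V} {s : ℝ} {z : V} (h : ZReach G f y s z) : s ≠ 0 := by
  obtain ⟨_, r, v, e, _, _, _, _, _, hs⟩ := h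
  rw [hs]
  exact sprod_ne_zero G r e

lemma zreach_opp {y y' z : V} {s s' : ℝ} (h : ZReach G f y s z) (h' : ZReach G f y' s' z)
    (hnr : ¬ Rel' G f y y') : (f y * s) * (f y' * s') < 0 := by
  rcases lt_trichotomy ((f y * s) * (f y' * s')) 0 with hl | hl | hl
  · exact hl
  · exact absurd hl (mul_ne_zero (mul_ne_zero h.1 h.s_ne_zero)
      (mul_ne_zero h'.1 h'.s_ne_zero))
  · exact absurd (Relation.ReflTransGen.single (h.merge h' hl)) hnr

lemma adj_apply_ne {x y : V} (h : x ≠ y) :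
    G.adj x y = ∑ e ∈ Finset.univ.filter (fun e : E => G.sign x e ≠ 0 ∧ G.sign y e ≠ 0),
      G.edgeSign e := by
  show (G.adj : Matrix V V ℝ) x y = _
  unfold SignedHypergraph.adj
  simp only [Matrix.of_apply, if_neg h]

lemma NWalk.mono {r r' : ℕ} {v : ℕ → V} {e : ℕ → E} (h : NWalk G r v e) (hr : r' ≤ r) :
    NWalk G r' v e := fun t ht => h t (by omega)

/-- The key propagation lemma: along a walk with zero interior, the multiplier is constant. -/
lemma key_prop {lam : ℝ} (hf : G.lap.mulVec f = lam • f) {c : V → ℝ}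
    (hcc : ∀ x y, f x ≠ 0 → f y ≠ 0 → Rel' G f x y → c x = c y)
    (hE1 : ∀ x y, f x ≠ 0 → f y ≠ 0 → (∃ e, G.sign x e ≠ 0 ∧ G.sign y e ≠ 0) → c x = c y)
    (hAGz : ∀ z, f z = 0 → ∑ y, G.adj z y * (c y * f y) = 0)
    {u v : V} (hu : f u ≠ 0) (hv : f v ≠ 0)
    {r : ℕ} {w : ℕ → V} {e : ℕ → E} (hr : 1 ≤ r) (hw : NWalk G r w e)
    (h0 : w 0 = u) (hrv : w r = v)
    (hz : ∀ t, 0 < t → t < r → f (w t) = 0) : c u = c v := by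
  classical
  rcases eq_or_lt_of_le hr with hr1 | hr2
  · -- direct edge
    refine hE1 u v hu hv ⟨e 0, ?_, ?_⟩
    · have := (hw 0 (by omega)).1
      rwa [h0] at this
    · have := (hw 0 (by omega)).2
      rw [show (0:ℕ)+1 = r from by omega, hrv] at this
      exact this
  -- now r ≥ 2; let z be the first interior vertex
  set z := w 1 with hzdef
  have hfz : f z = 0 := hz 1 (by omega) (by omega)
  have hsz : G.sign z (e 0) ≠ 0 := (hw 0 (by omega)).2
  have hsu : G.sign u (e 0) ≠ 0 := by
    have := (hw 0 (by omega)).1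
    rwa [h0] at this
  have Ru : ZReach G f u (G.edgeSign (e 0)) z := ZReach.base (e 0) hu hfz hsu hsz
  -- reach from v backwards
  have Rv : ZReach G f v (sprod G (r-1) (fun t => e (r-1-t))) z := by
    refine ⟨hv, r - 1, (fun t => w (r - t)), (fun t => e (r-1-t)), by omega,
      hw.rev.mono (by omega), ?_, ?_, ?_, rfl⟩
    · show w (r - 0) = v
      rw [Nat.sub_zero, hrv]
    · show w (r - (r-1)) = z
      have : r - (r - 1) = 1 := by omega
      rw [this]
    · intro t ht1 ht2
      exact hz (r - t) (by omega) (by omega)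
  by_cases hrel : Rel' G f u v
  · exact hcc u v hu hv hrel
  -- the two classes touching z
  set P : V → Prop := fun y => f y ≠ 0 ∧ Rel' G f u y with hPdef
  set Q : V → Prop := fun y => f y ≠ 0 ∧ Rel' G f v y with hQdef
  have hdisj : ∀ y, P y → Q y → False := by
    intro y hy1 hy2
    exact hrel (Rel'_trans hy1.2 (Rel'_symm hy2.2))
  have hR3 : ∀ y, f y ≠ 0 → ¬ Rel' G f u y → ¬ Rel' G f v y → G.adj z y = 0 := by
    intro y hy hnu hnv
    by_contra hne
    have hzy : z ≠ y := fun h => hy (h ▸ hfz)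
    rw [adj_apply_ne hzy] at hne
    obtain ⟨e', he'mem, he'ne⟩ := Finset.exists_ne_zero_of_sum_ne_zero hne
    simp only [Finset.mem_filter] at he'mem
    have Ry : ZReach G f y (G.edgeSign e') z :=
      ZReach.base e' hy hfz he'mem.2.2 he'mem.2.1
    exact three_neg (zreach_opp Ru Rv hrel)
      (zreach_opp Ru Ry hnu) (zreach_opp Rv Ry hnv)
  set t1 := ∑ y ∈ Finset.univ.filter P, G.adj z y * f y with ht1def
  set t2 := ∑ y ∈ Finset.univ.filter Q, G.adj z y * f y with ht2def
  have hpart : ∀ F : V → ℝ, (∀ y, f y = 0 → F y = 0) →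
      (∀ y, f y ≠ 0 → ¬ Rel' G f u y → ¬ Rel' G f v y → F y = 0) →
      ∑ y, F y = (∑ y ∈ Finset.univ.filter P, F y) + ∑ y ∈ Finset.univ.filter Q, F y := by
    intro F h1 h2
    rw [← Finset.sum_filter_add_sum_filter_not Finset.univ P F]
    congr 1
    symm
    apply Finset.sum_subset
    · intro y hy
      simp only [Finset.mem_filter] at hy ⊢
      exact ⟨hy.1, fun hP => hdisj y hP hy.2⟩
    · intro y hy hynot
      simp only [Finset.mem_filter, Finset.mem_univ, true_and] at hy hynot
      by_cases hfy : f y = 0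
      · exact h1 y hfy
      · exact h2 y hfy (fun hR => hy ⟨hfy, hR⟩) (fun hR => hynot ⟨hfy, hR⟩)
  have hAf : ∑ y, G.adj z y * f y = 0 := by
    rw [eigen_pointwise hf z, hfz, mul_zero]
  have hsplit_f : t1 + t2 = 0 := by
    rw [ht1def, ht2def, ← hpart (fun y => G.adj z y * f y)
      (fun y hy => by show G.adj z y * f y = 0; rw [hy, mul_zero])
      (fun y hy hh1 hh2 => by show G.adj z y * f y = 0; rw [hR3 y hy hh1 hh2, zero_mul])]
    exact hAf
  have hsplit_g : c u * t1 + c v * t2 = 0 := by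
    have hg0 := hAGz z hfz
    have hpg := hpart (fun y => G.adj z y * (c y * f y))
      (fun y hy => by show G.adj z y * (c y * f y) = 0; rw [hy, mul_zero, mul_zero])
      (fun y hy hh1 hh2 => by
        show G.adj z y * (c y * f y) = 0; rw [hR3 y hy hh1 hh2, zero_mul])
    rw [hpg] at hg0
    have hP1 : ∑ y ∈ Finset.univ.filter P, G.adj z y * (c y * f y) = c u * t1 := by
      rw [ht1def, Finset.mul_sum]
      apply Finset.sum_congr rfl
      intro y hy
      simp only [Finset.mem_filter, Finset.mem_univ, true_and] at hy
      rw [hcc u y hu hy.1 hy.2]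
      ring
    have hQ1 : ∑ y ∈ Finset.univ.filter Q, G.adj z y * (c y * f y) = c v * t2 := by
      rw [ht2def, Finset.mul_sum]
      apply Finset.sum_congr rfl
      intro y hy
      simp only [Finset.mem_filter, Finset.mem_univ, true_and] at hy
      rw [hcc v y hv hy.1 hy.2]
      ring
    rw [hP1, hQ1] at hg0
    exact hg0
  by_cases ht1 : t1 = 0
  · -- parity contradiction
    exfalso
    set a := f u * G.edgeSign (e 0) with ha
    have ha0 : a ≠ 0 := mul_ne_zero hu (edgeSign_ne_zero G _)
    have humem : u ∈ Finset.univ.filter P :=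
      Finset.mem_filter.mpr ⟨Finset.mem_univ u, hu, Relation.ReflTransGen.refl⟩
    have he0mem : e 0 ∈ Finset.univ.filter
        (fun e'' : E => G.sign z e'' ≠ 0 ∧ G.sign u e'' ≠ 0) :=
      Finset.mem_filter.mpr ⟨Finset.mem_univ _, hsz, hsu⟩
    have hopp : ∃ y' ∈ Finset.univ.filter P, ∃ e' ∈ Finset.univ.filter
        (fun e'' : E => G.sign z e'' ≠ 0 ∧ G.sign y' e'' ≠ 0),
          (f y' * G.edgeSign e') * a < 0 := by
      by_contra hno
      push_neg at hno
      have hta : t1 * a = ∑ y ∈ Finset.univ.filter P,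
          ∑ e' ∈ Finset.univ.filter (fun e'' : E => G.sign z e'' ≠ 0 ∧ G.sign y e'' ≠ 0),
            (f y * G.edgeSign e') * a := by
        rw [ht1def, Finset.sum_mul]
        apply Finset.sum_congr rfl
        intro y hy
        simp only [Finset.mem_filter, Finset.mem_univ, true_and] at hy
        have hzy : z ≠ y := fun h => hy.1 (h ▸ hfz)
        rw [adj_apply_ne hzy, Finset.sum_mul, Finset.sum_mul]
        apply Finset.sum_congr rfl
        intro e'' _
        ring
      have hposu : 0 < ∑ e' ∈ Finset.univ.filter
          (fun e'' : E => G.sign z e'' ≠ 0 ∧ G.sign u e'' ≠ 0), (f u * G.edgeSign e') * a := by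
        have hterm : 0 < (f u * G.edgeSign (e 0)) * a := by
          rw [← ha]
          exact mul_self_pos.mpr ha0
        calc (0:ℝ) < (f u * G.edgeSign (e 0)) * a := hterm
          _ ≤ _ := Finset.single_le_sum (fun e'' he'' => hno u humem e'' he'') he0mem
      have htot : 0 < t1 * a := by
        rw [hta]
        calc (0:ℝ) < ∑ e' ∈ (Finset.univ.filter
            (fun e'' : E => G.sign z e'' ≠ 0 ∧ G.sign u e'' ≠ 0)),
              (f u * G.edgeSign e') * a := hposu
          _ ≤ _ := Finset.single_le_sum
              (fun y hy => Finset.sum_nonneg fun e'' he'' => hno y hy e'' he'') humem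
      rw [ht1, zero_mul] at htot
      exact lt_irrefl 0 htot
    obtain ⟨y', hy'P, e', he'm, hoppv⟩ := hopp
    simp only [Finset.mem_filter, Finset.mem_univ, true_and] at hy'P he'm
    have Ry' : ZReach G f y' (G.edgeSign e') z := ZReach.base e' hy'P.1 hfz he'm.2 he'm.1
    have hnry' : ¬ Rel' G f y' v := fun h => hrel (Rel'_trans hy'P.2 h)
    have h2 := zreach_opp Ry' Rv hnry'
    have h3 := zreach_opp Ru Rv hrel
    exact three_neg hoppv h2 h3
  · have h9 : (c u - c v) * t1 = 0 := by linear_combination hsplit_g - c v * hsplit_f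
    rcases mul_eq_zero.mp h9 with h | h
    · linarith
    · exact absurd h ht1

lemma dInner_add_left (u1 u2 w : V → ℝ) :
    dInner G (fun v => u1 v + u2 v) w = dInner G u1 w + dInner G u2 w := by
  unfold SignedHypergraph.dInner
  rw [← Finset.sum_add_distrib]
  exact Finset.sum_congr rfl fun v _ => by ring

lemma dInner_smul_left (a : ℝ) (u w : V → ℝ) :
    dInner G (fun v => a * u v) w = a * dInner G u w := by
  unfold SignedHypergraph.dInner
  rw [Finset.mul_sum]
  exact Finset.sum_congr rfl fun v _ => by ring

lemma NWalk.snoc {r : ℕ} {w : ℕ → V} {e : ℕ → E} (h : NWalk G r w e) {e0 : E} {z : V}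
    (h1 : G.sign (w r) e0 ≠ 0) (h2 : G.sign z e0 ≠ 0) :
    NWalk G (r+1) (fun t => if t ≤ r then w t else z)
      (fun t => if t < r then e t else e0) := by
  intro t ht
  by_cases hc : t < r
  · simp only [if_pos hc, if_pos (Nat.le_of_lt hc), if_pos (Nat.succ_le_of_lt hc)]
    exact h t hc
  · have hteq : t = r := by omega
    subst hteq
    simp only [if_neg (lt_irrefl t), if_pos (le_refl t), if_neg (by omega : ¬ t + 1 ≤ t)]
    exact ⟨h1, h2⟩

lemma rtg_to_walk {u v : V} (h : Relation.ReflTransGen (AdjRel0 G) u v) :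
    u = v ∨ ∃ r w e, 1 ≤ r ∧ NWalk G r w e ∧ w 0 = u ∧ w r = v := by
  induction h with
  | refl => exact Or.inl rfl
  | @tail b cc hab hbc ih =>
    obtain ⟨_, _, e0, _, hs1, hs2⟩ := hbc
    rcases ih with rfl | ⟨r, w, e, hr, hw, h0, hrv⟩
    · right
      refine ⟨1, (fun t => if t = 0 then u else cc), (fun _ => e0), le_rfl, ?_, by simp, by simp⟩
      intro t ht
      have hteq : t = 0 := by omega
      subst hteq
      simp only [if_pos rfl, if_neg (by norm_num : (0:ℕ)+1 ≠ 0)]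
      exact ⟨hs1, hs2⟩
    · right
      have hs1' : G.sign (w r) e0 ≠ 0 := by rw [hrv]; exact hs1
      refine ⟨r + 1, _, _, by omega, hw.snoc hs1' hs2, ?_, ?_⟩
      · simp only [if_pos (Nat.zero_le r)]
        exact h0
      · simp only [if_neg (by omega : ¬ r + 1 ≤ r)]

lemma walk_c_eq {lam : ℝ} (hf : G.lap.mulVec f = lam • f) {c : V → ℝ}
    (hcc : ∀ x y, f x ≠ 0 → f y ≠ 0 → Rel' G f x y → c x = c y)
    (hE1 : ∀ x y, f x ≠ 0 → f y ≠ 0 → (∃ e, G.sign x e ≠ 0 ∧ G.sign y e ≠ 0) → c x = c y)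
    (hAGz : ∀ z, f z = 0 → ∑ y, G.adj z y * (c y * f y) = 0) :
    ∀ r (w : ℕ → V) (e : ℕ → E), NWalk G r w e → f (w 0) ≠ 0 → f (w r) ≠ 0 →
      c (w 0) = c (w r) := by
  intro r
  induction r using Nat.strong_induction_on with
  | _ r IH =>
    intro w e hw h0 hr
    rcases Nat.eq_zero_or_pos r with rfl | hrpos
    · rfl
    have hex : ∃ t, 0 < t ∧ t ≤ r ∧ f (w t) ≠ 0 := ⟨r, hrpos, le_rfl, hr⟩
    set p := Nat.find hex with hpdef
    obtain ⟨hp1, hp2, hp3⟩ := Nat.find_spec hex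
    have hmin : ∀ t, 0 < t → t < p → f (w t) = 0 := by
      intro t ht1 ht2
      by_contra hne
      exact (Nat.find_min hex ht2) ⟨ht1, by omega, hne⟩
    have hfirst : c (w 0) = c (w p) :=
      key_prop hf hcc hE1 hAGz h0 hp3 hp1 (hw.mono (by omega)) rfl rfl hmin
    have htail : NWalk G (r - p) (fun t => w (p + t)) (fun t => e (p + t)) := by
      intro t ht
      exact hw (p + t) (by omega)
    have hrec := IH (r - p) (by omega) _ _ htail hp3 ?_
    · have hend : p + (r - p) = r := by omega
      rw [hend] at hrec
      exact hfirst.trans hrec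
    · show f (w (p + (r - p))) ≠ 0
      have hend : p + (r - p) = r := by omega
      rw [hend]
      exact hr

end CourantAux


set_option maxHeartbeats 2000000 in
open CourantAux SignedHypergraph in
theorem stmt7' {V E : Type} [Fintype V] [Fintype E] [DecidableEq V] [DecidableEq E]
    (G : SignedHypergraph V E)
    (lam : Fin (Fintype.card V) → ℝ) (Φ : Fin (Fintype.card V) → V → ℝ)
    (hmono : Monotone lam) (heig : ∀ i, G.lap.mulVec (Φ i) = lam i • Φ i)
    (hli : LinearIndependent ℝ Φ)
    (k : Fin (Fintype.card V))
    (f : V → ℝ) (hf0 : f ≠ 0) (hf : G.lap.mulVec f = lam k • f) :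
    G.weakDomainCount f ≤ (k : ℕ) + G.componentsOn Finset.univ (fun _ => True) ∧
      (G.Connected → G.weakDomainCount f ≤ (k : ℕ) + 1) := by
  classical
  obtain ⟨v₀, hv₀'⟩ := Function.ne_iff.mp hf0
  have hv₀ : f v₀ ≠ 0 := hv₀'
  have hnv : 0 < Fintype.card V := Fintype.card_pos_iff.mpr ⟨v₀⟩
  have hmain : G.weakDomainCount f ≤ (k : ℕ) + G.componentsOn Finset.univ (fun _ => True) := by
    by_contra hcon
    push_neg at hcon
    rw [weakDomainCount_eq, componentsOn_eq] at hcon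
    haveI hclsF : Fintype ↥(classSet G f) := (Set.toFinite _).fintype
    haveI hcompF : Fintype ↥(compSet G) := (Set.toFinite _).fintype
    have hcard1 : Fintype.card ↥(classSet G f) = (classSet G f).ncard := by
      rw [← Nat.card_coe_set_eq, Nat.card_eq_fintype_card]
    have hcard2 : Fintype.card ↥(compSet G) = (compSet G).ncard := by
      rw [← Nat.card_coe_set_eq, Nat.card_eq_fintype_card]
    set K := (k : ℕ) with hKdef
    have hKlt : K < Fintype.card V := k.isLt
    set cOf : (↥(classSet G f) → ℝ) → V → ℝ := fun γ v =>
      if h : f v ≠ 0 then γ ⟨cls G f v, ⟨v, h, rfl⟩⟩ else 0 with hcOfdef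
    have hcOf_add : ∀ γ1 γ2 v, cOf (γ1 + γ2) v = cOf γ1 v + cOf γ2 v := by
      intro γ1 γ2 v
      show (if h : f v ≠ 0 then (γ1 + γ2) ⟨cls G f v, ⟨v, h, rfl⟩⟩ else 0)
        = (if h : f v ≠ 0 then γ1 ⟨cls G f v, ⟨v, h, rfl⟩⟩ else 0)
          + (if h : f v ≠ 0 then γ2 ⟨cls G f v, ⟨v, h, rfl⟩⟩ else 0)
      by_cases h : f v ≠ 0
      · simp only [dif_pos h, Pi.add_apply]
      · simp only [dif_neg h, add_zero]
    have hcOf_smul : ∀ (a : ℝ) γ v, cOf (a • γ) v = a * cOf γ v := by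
      intro a γ v
      show (if h : f v ≠ 0 then (a • γ) ⟨cls G f v, ⟨v, h, rfl⟩⟩ else 0)
        = a * (if h : f v ≠ 0 then γ ⟨cls G f v, ⟨v, h, rfl⟩⟩ else 0)
      by_cases h : f v ≠ 0
      · simp only [dif_pos h, Pi.smul_apply, smul_eq_mul]
      · simp only [dif_neg h, mul_zero]
    set Ψfun1 : (↥(classSet G f) → ℝ) → (Fin K → ℝ) := fun γ j =>
      dInner G (fun v => cOf γ v * f v) (Φ ⟨(j : ℕ), lt_trans j.isLt hKlt⟩) with hΨ1def
    set Ψfun2 : (↥(classSet G f) → ℝ) → (↥(compSet G) → ℝ) := fun γ X =>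
      if h : ∃ C, C ∈ classSet G f ∧ C ⊆ X.val then γ ⟨h.choose, h.choose_spec.1⟩ else 0
      with hΨ2def
    have hlin1 : IsLinearMap ℝ Ψfun1 := by
      constructor
      · intro γ1 γ2
        funext j
        show dInner G (fun v => cOf (γ1 + γ2) v * f v) (Φ ⟨(j : ℕ), lt_trans j.isLt hKlt⟩)
          = dInner G (fun v => cOf γ1 v * f v) (Φ ⟨(j : ℕ), lt_trans j.isLt hKlt⟩)
            + dInner G (fun v => cOf γ2 v * f v) (Φ ⟨(j : ℕ), lt_trans j.isLt hKlt⟩)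
        rw [show (fun v => cOf (γ1 + γ2) v * f v)
            = fun v => (cOf γ1 v * f v) + (cOf γ2 v * f v) from
          funext fun v => by rw [hcOf_add]; ring]
        exact dInner_add_left _ _ _
      · intro a γ
        funext j
        show dInner G (fun v => cOf (a • γ) v * f v) (Φ ⟨(j : ℕ), lt_trans j.isLt hKlt⟩)
          = a * dInner G (fun v => cOf γ v * f v) (Φ ⟨(j : ℕ), lt_trans j.isLt hKlt⟩)
        rw [show (fun v => cOf (a • γ) v * f v) = fun v => a * (cOf γ v * f v) from
          funext fun v => by rw [hcOf_smul]; ring]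
        exact dInner_smul_left _ _ _
    have hlin2 : IsLinearMap ℝ Ψfun2 := by
      constructor
      · intro γ1 γ2
        funext X
        show (if h : ∃ C, C ∈ classSet G f ∧ C ⊆ X.val
            then (γ1 + γ2) ⟨h.choose, h.choose_spec.1⟩ else 0)
          = (if h : ∃ C, C ∈ classSet G f ∧ C ⊆ X.val
            then γ1 ⟨h.choose, h.choose_spec.1⟩ else 0)
            + (if h : ∃ C, C ∈ classSet G f ∧ C ⊆ X.val
            then γ2 ⟨h.choose, h.choose_spec.1⟩ else 0)
        by_cases h : ∃ C, C ∈ classSet G f ∧ C ⊆ X.val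
        · simp only [dif_pos h, Pi.add_apply]
        · simp only [dif_neg h, add_zero]
      · intro a γ
        funext X
        show (if h : ∃ C, C ∈ classSet G f ∧ C ⊆ X.val
            then (a • γ) ⟨h.choose, h.choose_spec.1⟩ else 0)
          = a * (if h : ∃ C, C ∈ classSet G f ∧ C ⊆ X.val
            then γ ⟨h.choose, h.choose_spec.1⟩ else 0)
        by_cases h : ∃ C, C ∈ classSet G f ∧ C ⊆ X.val
        · simp only [dif_pos h, Pi.smul_apply, smul_eq_mul]
        · simp only [dif_neg h, mul_zero]
    set Ψ1 := IsLinearMap.mk' Ψfun1 hlin1 with hΨ1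
    set Ψ2 := IsLinearMap.mk' Ψfun2 hlin2 with hΨ2
    have hninj : ¬ Function.Injective (LinearMap.prod Ψ1 Ψ2) := by
      intro hinj
      have hle := LinearMap.finrank_le_finrank_of_injective hinj
      rw [Module.finrank_prod, Module.finrank_fintype_fun_eq_card,
        Module.finrank_fintype_fun_eq_card, Module.finrank_fintype_fun_eq_card,
        Fintype.card_fin, hcard1, hcard2] at hle
      omega
    have hker : ∃ γ, (LinearMap.prod Ψ1 Ψ2) γ = 0 ∧ γ ≠ 0 := by
      by_contra hno
      push_neg at hno
      apply hninj
      rw [← LinearMap.ker_eq_bot]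
      exact (Submodule.eq_bot_iff _).mpr fun γ hγ => hno γ hγ
    obtain ⟨γ, hγ0, hγne⟩ := hker
    have hγ1 : Ψ1 γ = 0 := congrArg Prod.fst hγ0
    have hγ2 : Ψ2 γ = 0 := congrArg Prod.snd hγ0
    set c : V → ℝ := cOf γ with hcdef
    have hclsv : ∀ v, f v ≠ 0 → cls G f v ∈ classSet G f :=
      fun v h => ⟨v, h, rfl⟩
    have hcγ : ∀ v (h : f v ≠ 0), c v = γ ⟨cls G f v, hclsv v h⟩ := by
      intro v h
      show (if h' : f v ≠ 0 then γ ⟨cls G f v, ⟨v, h', rfl⟩⟩ else 0) = _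
      rw [dif_pos h]
    have hcc : ∀ x y, f x ≠ 0 → f y ≠ 0 → Rel' G f x y → c x = c y := by
      intro x y hx hy hr
      rw [hcγ x hx, hcγ y hy]
      exact congrArg γ (Subtype.ext (cls_eq_of_rel' hr))
    have horth : ∀ j, j < k → dInner G (fun v => c v * f v) (Φ j) = 0 := by
      intro j hj
      have hjK : (j : ℕ) < K := hj
      have h1 : dInner G (fun v => c v * f v) (Φ j) = 0 := congrFun hγ1 ⟨(j : ℕ), hjK⟩
      exact h1
    have hT := T_formula hf c
    have hTge : 0 ≤ lam k * dInner G (fun v => c v * f v) (fun v => c v * f v)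
        - dInner G (fun v => c v * f v) (G.lap.mulVec fun v => c v * f v) := by
      rw [hT]
      exact Finset.sum_nonneg fun x _ => Finset.sum_nonneg fun y _ => Tterm_nonneg hcc x y
    obtain ⟨hS0, heigg⟩ := S_analysis hnv lam Φ hmono heig hli k
      (fun v => c v * f v) horth (by linarith)
    have hT0 : ∑ x, ∑ y, (-(1/2)) * (G.adj x y * f x * f y) * (c x - c y)^2 = 0 := by
      rw [← hT]; linarith
    have hE1 := T_zero_extract hcc hT0
    have hAGz : ∀ z, f z = 0 → ∑ y, G.adj z y * (c y * f y) = 0 := by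
      intro z hz
      by_cases hd : G.deg z = 0
      · exact Finset.sum_eq_zero fun y _ => by
          rw [adj_eq_zero_of_deg_eq_zero hd y, zero_mul]
      · have h1 := heigg z hd
        rw [lap_mulVec] at h1
        have h2 : c z * f z - (∑ y, G.adj z y * (c y * f y)) / (G.deg z : ℝ)
            = lam k * (c z * f z) := h1
        rw [hz, mul_zero] at h2
        have h3 : (∑ y, G.adj z y * (c y * f y)) / (G.deg z : ℝ) = 0 := by linarith
        rcases div_eq_zero_iff.mp h3 with h4 | h4
        · exact h4
        · exact absurd h4 (Nat.cast_ne_zero.mpr hd)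
    have hwalk := walk_c_eq hf hcc hE1 hAGz
    have hexw : ∃ w, f w ≠ 0 ∧ c w ≠ 0 := by
      by_contra hno
      push_neg at hno
      apply hγne
      funext C
      obtain ⟨w, hw, hCw⟩ := C.2
      have h1 : c w = γ C := by
        rw [hcγ w hw]
        exact congrArg γ (Subtype.ext hCw.symm)
      have h2 := hno w hw
      rw [h1] at h2
      exact h2
    obtain ⟨w, hw, hcw⟩ := hexw
    have hX0 : compOf G w ∈ compSet G := ⟨w, Finset.mem_univ w, rfl⟩
    have hexC : ∃ C, C ∈ classSet G f ∧ C ⊆ compOf G w :=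
      ⟨cls G f w, hclsv w hw, by
        rintro y ⟨hy1, hy2⟩
        exact ⟨Finset.mem_univ y, rel'_toRTG hy2⟩⟩
    have hdes : (if h : ∃ C, C ∈ classSet G f ∧ C ⊆ compOf G w
        then γ ⟨h.choose, h.choose_spec.1⟩ else 0) = 0 :=
      congrFun hγ2 (⟨compOf G w, hX0⟩ : ↥(compSet G))
    rw [dif_pos hexC] at hdes
    obtain ⟨w₀, hw₀, hCw₀⟩ := hexC.choose_spec.1
    have hw₀mem : w₀ ∈ hexC.choose := by
      rw [hCw₀]; exact mem_cls_self hw₀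
    have hw₀comp := hexC.choose_spec.2 hw₀mem
    have hrtg : Relation.ReflTransGen (AdjRel0 G) w w₀ := hw₀comp.2
    have hcw₀ : c w₀ = 0 := by
      rw [hcγ w₀ hw₀,
        show (⟨cls G f w₀, hclsv w₀ hw₀⟩ : ↥(classSet G f))
          = ⟨hexC.choose, hexC.choose_spec.1⟩ from Subtype.ext hCw₀.symm]
      exact hdes
    rcases rtg_to_walk hrtg with heq | ⟨r, wk, ew, hr, hwk, h0, hrv⟩
    · rw [heq] at hcw; exact hcw hcw₀
    · have hceq := hwalk r wk ew hwk (by rw [h0]; exact hw) (by rw [hrv]; exact hw₀)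
      rw [h0, hrv] at hceq
      exact hcw (hceq.trans hcw₀)
  refine ⟨hmain, ?_⟩
  intro hconn
  have hc1 : G.componentsOn Finset.univ (fun _ => True) = 1 := by
    rw [componentsOn_eq]
    have huniv : ∀ v : V, compOf G v = Set.univ := by
      intro v
      ext u
      simp only [compOf, Set.mem_setOf_eq, Finset.mem_univ, true_and, Set.mem_univ, iff_true]
      exact Relation.ReflTransGen.mono
        (fun a b hab => ⟨Finset.mem_univ a, Finset.mem_univ b,
          hab.choose, trivial, hab.choose_spec.1, hab.choose_spec.2⟩) _ _ (hconn v u)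
    have hset : compSet G = {Set.univ} := by
      ext C
      simp only [compSet, Set.mem_setOf_eq, Set.mem_singleton_iff]
      constructor
      · rintro ⟨v, _, rfl⟩
        exact huniv v
      · rintro rfl
        exact ⟨v₀, Finset.mem_univ v₀, (huniv v₀).symm⟩
    rw [hset, Set.ncard_singleton]
  calc G.weakDomainCount f ≤ (k : ℕ) + G.componentsOn Finset.univ (fun _ => True) := hmain
    _ = (k : ℕ) + 1 := by rw [hc1]


variable {V E : Type} [Fintype V] [Fintype E] [DecidableEq V] [DecidableEq E]

theorem stmt7 (G : SignedHypergraph V E)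
    (lam : Fin (Fintype.card V) → ℝ) (Φ : Fin (Fintype.card V) → V → ℝ)
    (hmono : Monotone lam) (heig : ∀ i, G.lap.mulVec (Φ i) = lam i • Φ i)
    (hli : LinearIndependent ℝ Φ)
    (k : Fin (Fintype.card V))
    (f : V → ℝ) (hf0 : f ≠ 0) (hf : G.lap.mulVec f = lam k • f) :
    G.weakDomainCount f ≤ (k : ℕ) + G.componentsOn Finset.univ (fun _ => True) ∧
      (G.Connected → G.weakDomainCount f ≤ (k : ℕ) + 1) :=
  stmt7' G lam Φ hmono heig hli k f hf0 hf
end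

section
/- (Discrete unique continuation.) Let Γ=(H,σ) be a connected signed hypergraph with normalized Laplacian L, and let f be an eigenfunction of L for eigenvalue λ with weak nodal domains D_1,...,D_m. Define g_i = f·1_{D_i} (f restricted to D_i, zero elsewhere). If g = Σ_{i=1}^m a_i g_i with a_i ∈ ℝ is also an eigenfunction of L for λ, then a_1 = a_2 = ⋯ = a_m. -/
attribute [local instance] Classical.propDecidable

open Finset Matrix

variable {V E : Type} [Fintype V] [Fintype E] [DecidableEq V] [DecidableEq E]
namespace SignedHypergraph

variable {V E : Type} [Fintype V] [Fintype E] [DecidableEq V] [DecidableEq E]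

lemma edgeSign_ne_zero (G : SignedHypergraph V E) (e : E) : G.edgeSign e ≠ 0 := by
  unfold edgeSign
  apply mul_ne_zero
  · exact pow_ne_zero _ (by norm_num)
  · exact Finset.prod_ne_zero_iff.mpr fun v hv => (Finset.mem_filter.mp hv).2

/-- ℕ-indexed version of a W-path. -/
def NWalk (G : SignedHypergraph V E) (f : V → ℝ) (n : ℕ) (v : ℕ → V) (e : ℕ → E) : Prop :=
  (∀ t, t < n → G.sign (v t) (e t) ≠ 0 ∧ G.sign (v (t+1)) (e t) ≠ 0) ∧
  ∀ i j, i < j → j ≤ n → f (v i) ≠ 0 → f (v j) ≠ 0 →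
    (∀ k, i < k → k < j → f (v k) = 0) →
    0 < f (v i) * (∏ t ∈ Finset.Ico i j, G.edgeSign (e t)) * f (v j)

lemma prod_if_Ico (F : ℕ → ℝ) (i j n : ℕ) (hj : j ≤ n) :
    (∏ t : Fin n, if i ≤ (t : ℕ) ∧ (t : ℕ) < j then F (t : ℕ) else 1)
      = ∏ t ∈ Finset.Ico i j, F t := by
  rw [Fin.prod_univ_eq_prod_range (fun t => if i ≤ t ∧ t < j then F t else 1) n,
    ← Finset.prod_filter]
  congr 1
  ext t
  simp only [Finset.mem_filter, Finset.mem_range, Finset.mem_Ico]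
  omega

lemma NWalk.wrel {G : SignedHypergraph V E} {f : V → ℝ} {n : ℕ} {v : ℕ → V} {e : ℕ → E}
    (h : G.NWalk f n v e) : G.wRel f (v 0) (v n) := by
  rcases Nat.eq_zero_or_pos n with hn | hn
  · subst hn; exact Or.inl rfl
  refine Or.inr ⟨n, fun k => v (k : ℕ), fun t => e (t : ℕ), ⟨?_, ?_⟩, rfl, ?_⟩
  · intro t
    exact h.1 t t.isLt
  · intro i j hij hfi hfj hzero
    have hprod : (∏ t : Fin n,
        if (i : ℕ) ≤ (t : ℕ) ∧ (t : ℕ) < (j : ℕ) then G.edgeSign (e (t : ℕ)) else 1)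
        = ∏ t ∈ Finset.Ico (i : ℕ) (j : ℕ), G.edgeSign (e t) :=
      prod_if_Ico (fun s => G.edgeSign (e s)) _ _ n (by omega)
    rw [hprod]
    refine h.2 i j hij (by omega) hfi hfj ?_
    intro k h1 h2
    have hk : k < n + 1 := by omega
    exact hzero ⟨k, hk⟩ (by simpa [Fin.lt_def] using h1) (by simpa [Fin.lt_def] using h2)
  · simp [Fin.last]

lemma wrel_nwalk {G : SignedHypergraph V E} {f : V → ℝ} {x y : V} (h : G.wRel f x y) :
    x = y ∨ ∃ n v e, G.NWalk f n v e ∧ v 0 = x ∧ v n = y := by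
  rcases h with rfl | ⟨ℓ, v, e, ⟨he, hp⟩, hv0, hvl⟩
  · exact Or.inl rfl
  rcases Nat.eq_zero_or_pos ℓ with hl | hl
  · left
    subst hl
    rw [← hv0, ← hvl]
    congr 1
  right
  refine ⟨ℓ, fun k => if hk : k ≤ ℓ then v ⟨k, Nat.lt_succ_of_le hk⟩ else v (Fin.last ℓ),
    fun t => if ht : t < ℓ then e ⟨t, ht⟩ else e ⟨0, hl⟩, ⟨?_, ?_⟩, ?_, ?_⟩
  · intro t ht
    beta_reduce
    rw [dif_pos (Nat.le_of_lt ht), dif_pos ht, dif_pos (by omega : t + 1 ≤ ℓ)]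
    exact he ⟨t, ht⟩
  · intro i j hij hjl hfi hfj hz
    beta_reduce at hfi hfj ⊢
    rw [dif_pos (by omega : i ≤ ℓ)] at hfi ⊢
    rw [dif_pos hjl] at hfj ⊢
    have H := hp ⟨i, by omega⟩ ⟨j, by omega⟩ (by simpa [Fin.lt_def] using hij) hfi hfj ?_
    · have hprod : (∏ t : Fin ℓ,
          if i ≤ (t : ℕ) ∧ (t : ℕ) < j then G.edgeSign (e t) else 1)
          = ∏ t ∈ Finset.Ico i j,
              G.edgeSign (if ht : t < ℓ then e ⟨t, ht⟩ else e ⟨0, hl⟩) := by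
        rw [← prod_if_Ico (fun s => G.edgeSign (if hs : s < ℓ then e ⟨s, hs⟩ else e ⟨0, hl⟩))
          i j ℓ hjl]
        refine Finset.prod_congr rfl fun t _ => ?_
        rw [dif_pos t.isLt, Fin.eta]
      rw [← hprod]
      exact H
    · intro k h1 h2
      have h1' : i < (k : ℕ) := by simpa [Fin.lt_def] using h1
      have h2' : (k : ℕ) < j := by simpa [Fin.lt_def] using h2
      have := hz (k : ℕ) h1' h2'
      beta_reduce at this
      rwa [dif_pos (by omega : (k : ℕ) ≤ ℓ), Fin.eta] at this
  · beta_reduce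
    rw [dif_pos (Nat.zero_le ℓ), ← hv0]
    exact congrArg v (Fin.ext (by simp))
  · beta_reduce
    rw [dif_pos (le_refl ℓ), ← hvl]
    rfl

lemma mkNWalk (G : SignedHypergraph V E) (f : V → ℝ) (n : ℕ) (v : ℕ → V) (e : ℕ → E)
    (he : ∀ t, t < n → G.sign (v t) (e t) ≠ 0 ∧ G.sign (v (t+1)) (e t) ≠ 0)
    (hz : ∀ k, 0 < k → k < n → f (v k) = 0)
    (hs : f (v 0) ≠ 0 → f (v n) ≠ 0 →
      0 < f (v 0) * (∏ t ∈ Finset.Ico 0 n, G.edgeSign (e t)) * f (v n)) :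
    G.NWalk f n v e := by
  refine ⟨he, ?_⟩
  intro i j hij hjn hfi hfj _
  have hi0 : i = 0 := by
    by_contra h
    exact hfi (hz i (by omega) (by omega))
  have hjn' : j = n := by
    by_contra h
    exact hfj (hz j (by omega) (by omega))
  subst hi0; subst hjn'
  exact hs hfi hfj

lemma prod_Ico_reindex (F : ℕ → ℝ) (i j n : ℕ) (hj : j ≤ n) :
    (∏ t ∈ Finset.Ico i j, F (n - 1 - t)) = ∏ s ∈ Finset.Ico (n - j) (n - i), F s := by
  refine Finset.prod_bij' (fun t _ => n - 1 - t) (fun s _ => n - 1 - s) ?_ ?_ ?_ ?_ ?_ <;>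
    intro t ht <;> beta_reduce <;> simp only [Finset.mem_Ico] at ht ⊢ <;>
    first | omega | rfl

lemma prod_Ico_shift (F : ℕ → ℝ) (i j n : ℕ) (hi : n ≤ i) :
    (∏ t ∈ Finset.Ico i j, F (t - n)) = ∏ s ∈ Finset.Ico (i - n) (j - n), F s := by
  refine Finset.prod_bij' (fun t _ => t - n) (fun s _ => s + n) ?_ ?_ ?_ ?_ ?_ <;>
    intro t ht <;> beta_reduce <;> simp only [Finset.mem_Ico] at ht ⊢ <;>
    first | omega | rfl | rw [show t - n + n = t by omega]

lemma NWalk.symm {G : SignedHypergraph V E} {f : V → ℝ} {n : ℕ} {v : ℕ → V} {e : ℕ → E}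
    (h : G.NWalk f n v e) :
    G.NWalk f n (fun k => v (n - k)) (fun t => e (n - 1 - t)) := by
  obtain ⟨he, hp⟩ := h
  constructor
  · intro t ht
    beta_reduce
    have h1 := he (n - 1 - t) (by omega)
    rw [show n - t = (n - 1 - t) + 1 by omega, show n - (t+1) = n - 1 - t by omega]
    exact ⟨h1.2, h1.1⟩
  · intro i j hij hjn hfi hfj hz
    beta_reduce at hfi hfj ⊢
    have H := hp (n - j) (n - i) (by omega) (by omega) hfj hfi ?_
    · have hprod : (∏ t ∈ Finset.Ico i j, G.edgeSign (e (n - 1 - t)))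
          = ∏ s ∈ Finset.Ico (n - j) (n - i), G.edgeSign (e s) :=
        prod_Ico_reindex (fun s => G.edgeSign (e s)) i j n hjn
      have hre : f (v (n - i)) * (∏ t ∈ Finset.Ico i j, G.edgeSign (e (n - 1 - t))) * f (v (n - j))
          = f (v (n - j)) * (∏ s ∈ Finset.Ico (n - j) (n - i), G.edgeSign (e s)) * f (v (n - i)) := by
        rw [hprod]; ring
      rw [hre]
      exact H
    · intro k h1 h2
      have := hz (n - k) (by omega) (by omega)
      beta_reduce at this
      rwa [show n - (n - k) = k by omega] at this

lemma NWalk.trans {G : SignedHypergraph V E} {f : V → ℝ} {n₁ n₂ : ℕ}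
    {v₁ : ℕ → V} {e₁ : ℕ → E} {v₂ : ℕ → V} {e₂ : ℕ → E}
    (h1 : G.NWalk f n₁ v₁ e₁) (h2 : G.NWalk f n₂ v₂ e₂)
    (hj : v₁ n₁ = v₂ 0) (hnz : f (v₁ n₁) ≠ 0) :
    G.NWalk f (n₁ + n₂) (fun k => if k ≤ n₁ then v₁ k else v₂ (k - n₁))
      (fun t => if t < n₁ then e₁ t else e₂ (t - n₁)) := by
  set v : ℕ → V := fun k => if k ≤ n₁ then v₁ k else v₂ (k - n₁) with hv
  have hva : ∀ k, n₁ ≤ k → v k = v₂ (k - n₁) := by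
    intro k hk
    rcases Nat.eq_or_lt_of_le hk with rfl | hlt
    · simp only [hv, if_pos (le_refl n₁), Nat.sub_self, ← hj]
    · simp only [hv, if_neg (by omega : ¬ k ≤ n₁)]
  have hvb : ∀ k, k ≤ n₁ → v k = v₁ k := by
    intro k hk; simp only [hv, if_pos hk]
  constructor
  · intro t ht
    beta_reduce
    by_cases htn : t < n₁
    · rw [if_pos htn, show v t = v₁ t from hvb t (by omega),
        show v (t+1) = v₁ (t+1) from hvb (t+1) (by omega)]
      exact h1.1 t htn
    · rw [if_neg htn, show v t = v₂ (t - n₁) from hva t (by omega),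
        show v (t+1) = v₂ (t+1-n₁) from hva (t+1) (by omega),
        show t + 1 - n₁ = (t - n₁) + 1 by omega]
      exact h2.1 (t - n₁) (by omega)
  · intro i j hij hjn hfi hfj hz
    rcases le_or_gt j n₁ with hcase | hcase
    · beta_reduce
      have hvi : v i = v₁ i := hvb i (by omega)
      have hvj : v j = v₁ j := hvb j hcase
      rw [hvi] at hfi
      rw [hvj] at hfj
      rw [hvi, hvj]
      have H := h1.2 i j hij hcase hfi hfj ?_
      · have : (∏ t ∈ Finset.Ico i j, G.edgeSign (if t < n₁ then e₁ t else e₂ (t - n₁)))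
            = ∏ t ∈ Finset.Ico i j, G.edgeSign (e₁ t) := by
          refine Finset.prod_congr rfl fun t ht => ?_
          rw [if_pos (by simp [Finset.mem_Ico] at ht; omega : t < n₁)]
        rw [this]
        exact H
      · intro k hk1 hk2
        have := hz k hk1 hk2
        rwa [hvb k (by omega)] at this
    · rcases le_or_gt n₁ i with hcase2 | hcase2
      · beta_reduce
        have hvi : v i = v₂ (i - n₁) := hva i hcase2
        have hvj : v j = v₂ (j - n₁) := hva j (by omega)
        rw [hvi] at hfi
        rw [hvj] at hfj
        rw [hvi, hvj]
        have H := h2.2 (i - n₁) (j - n₁) (by omega) (by omega) hfi hfj ?_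
        · have : (∏ t ∈ Finset.Ico i j, G.edgeSign (if t < n₁ then e₁ t else e₂ (t - n₁)))
              = ∏ s ∈ Finset.Ico (i - n₁) (j - n₁), G.edgeSign (e₂ s) := by
            rw [show (∏ t ∈ Finset.Ico i j, G.edgeSign (if t < n₁ then e₁ t else e₂ (t - n₁)))
                = ∏ t ∈ Finset.Ico i j, G.edgeSign (e₂ (t - n₁)) from
              Finset.prod_congr rfl fun t ht => by
                rw [if_neg (by simp [Finset.mem_Ico] at ht; omega : ¬ t < n₁)]]
            exact prod_Ico_shift (fun s => G.edgeSign (e₂ s)) i j n₁ hcase2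
          rw [this]
          exact H
        · intro k hk1 hk2
          have := hz (n₁ + k) (by omega) (by omega)
          rwa [hva (n₁ + k) (by omega), show n₁ + k - n₁ = k by omega] at this
      · exfalso
        have := hz n₁ hcase2 hcase
        rw [hvb n₁ (le_refl _)] at this
        exact hnz this

lemma wRel_symm {G : SignedHypergraph V E} {f : V → ℝ} {x y : V} (h : G.wRel f x y) :
    G.wRel f y x := by
  rcases wrel_nwalk h with rfl | ⟨n, v, e, hw, rfl, rfl⟩
  · exact Or.inl rfl
  · have H := hw.symm.wrel
    simpa using H

lemma wRel_trans {G : SignedHypergraph V E} {f : V → ℝ} {x y z : V} (hy : f y ≠ 0)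
    (h1 : G.wRel f x y) (h2 : G.wRel f y z) : G.wRel f x z := by
  rcases wrel_nwalk h1 with rfl | ⟨n₁, v₁, e₁, hw1, rfl, rfl⟩
  · exact h2
  rcases wrel_nwalk h2 with heq | ⟨n₂, v₂, e₂, hw2, hv20, rfl⟩
  · rw [← heq]
    exact hw1.wrel
  rcases Nat.eq_zero_or_pos n₂ with h0 | hpos
  · subst h0
    rw [show v₂ 0 = v₁ n₁ from hv20]
    exact hw1.wrel
  · have H := (hw1.trans hw2 hv20.symm hy).wrel
    beta_reduce at H
    rw [if_pos (Nat.zero_le n₁), if_neg (by omega : ¬ n₁ + n₂ ≤ n₁),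
      show n₁ + n₂ - n₁ = n₂ by omega] at H
    exact H

end SignedHypergraph

variable {V E : Type} [Fintype V] [Fintype E] [DecidableEq V] [DecidableEq E]

set_option maxHeartbeats 1000000 in
theorem stmt8 (G : SignedHypergraph V E) (hconn : G.Connected) (lam : ℝ) (f : V → ℝ)
    (hf0 : f ≠ 0) (hf : G.lap.mulVec f = lam • f)
    (m : ℕ) (D : Fin m → Set V) (hinj : Function.Injective D)
    (hdom : ∀ i, G.IsWeakNodalDomain f (D i))
    (hall : ∀ C : Set V, G.IsWeakNodalDomain f C → ∃ i, C = D i)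
    (a : Fin m → ℝ)
    (hg0 : (fun x => ∑ i : Fin m, a i * if x ∈ D i then f x else 0) ≠ 0)
    (hg : G.lap.mulVec (fun x => ∑ i : Fin m, a i * if x ∈ D i then f x else 0) =
      lam • fun x => ∑ i : Fin m, a i * if x ∈ D i then f x else 0) :
    ∀ i j : Fin m, a i = a j := by
  intro i1 j1
  rcases Nat.lt_or_ge m 2 with hm | hm
  · have h1 := i1.isLt
    have h2 := j1.isLt
    have : i1 = j1 := Fin.ext (by omega)
    rw [this]
  have hm0 : 0 < m := by omega
  set g : V → ℝ := fun x => ∑ i : Fin m, a i * if x ∈ D i then f x else 0 with hgdef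
  obtain ⟨i₀, -, hmaxmem⟩ := Finset.exists_max_image (Finset.univ : Finset (Fin m)) a
    ⟨⟨0, hm0⟩, Finset.mem_univ _⟩
  set α := a i₀ with hα
  have hmax : ∀ k : Fin m, a k ≤ α := fun k => hmaxmem k (Finset.mem_univ k)
  -- domain representatives
  choose w hw hD using hdom
  -- equivalence classes
  have hclass : ∀ u y : V, f u ≠ 0 → f y ≠ 0 → G.wRel f u y →
      G.weakDomain f u = G.weakDomain f y := by
    intro u y hu hy huy
    ext x
    simp only [SignedHypergraph.weakDomain, Set.mem_setOf_eq]
    constructor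
    · rintro ⟨y₁, h1, h2, h3⟩
      exact ⟨y₁, h1, SignedHypergraph.wRel_trans hu (SignedHypergraph.wRel_symm huy) h2, h3⟩
    · rintro ⟨y₁, h1, h2, h3⟩
      exact ⟨y₁, h1, SignedHypergraph.wRel_trans hy huy h2, h3⟩
  -- index function on the support
  have hexj : ∀ y : V, ∃ i : Fin m, f y ≠ 0 → G.weakDomain f y = D i := by
    intro y
    by_cases hy : f y ≠ 0
    · obtain ⟨i, hi⟩ := hall (G.weakDomain f y) ⟨y, hy, rfl⟩
      exact ⟨i, fun _ => hi⟩
    · exact ⟨i₀, fun h => absurd h hy⟩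
  choose jV hjV using hexj
  have hmemD : ∀ y, f y ≠ 0 → y ∈ D (jV y) := by
    intro y hy
    rw [← hjV y hy]
    exact ⟨y, hy, Or.inl rfl, Or.inl rfl⟩
  have huniq : ∀ (y : V) (i : Fin m), f y ≠ 0 → y ∈ D i → i = jV y := by
    intro y i hy hyD
    apply hinj
    rw [hD i] at hyD
    obtain ⟨y₁, h1, h2, h3⟩ := hyD
    have hrel : G.wRel f (w i) y := SignedHypergraph.wRel_trans h1 h2
      (SignedHypergraph.wRel_symm h3)
    rw [hD i, hclass (w i) y (hw i) hy hrel, hjV y hy]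
  have hjEq : ∀ y y' : V, f y ≠ 0 → f y' ≠ 0 → G.wRel f y y' → jV y = jV y' := by
    intro y y' hy hy' hrel
    apply hinj
    rw [← hjV y hy, ← hjV y' hy', hclass y y' hy hy' hrel]
  -- g pointwise
  have hgsupp : ∀ y, f y ≠ 0 → g y = a (jV y) * f y := by
    intro y hy
    rw [hgdef]
    beta_reduce
    have hterm : ∀ i : Fin m, (a i * if y ∈ D i then f y else 0)
        = if i = jV y then a i * f y else 0 := by
      intro i
      by_cases hi : y ∈ D i
      · rw [if_pos hi, if_pos (huniq y i hy hi)]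
      · rw [if_neg hi, if_neg, mul_zero]
        intro he
        exact hi (he ▸ hmemD y hy)
    rw [Finset.sum_congr rfl fun i _ => hterm i,
      Finset.sum_ite_eq' Finset.univ (jV y) (fun i => a i * f y)]
    simp
  have hgzero : ∀ y, f y = 0 → g y = 0 := by
    intro y hy
    rw [hgdef]
    beta_reduce
    apply Finset.sum_eq_zero
    intro i _
    rw [hy]
    simp
  -- degrees
  have hdegnz : ∀ (x : V) (e : E), G.sign x e ≠ 0 → (G.deg x : ℝ) ≠ 0 := by
    intro x e he
    have : 0 < G.deg x :=
      Finset.card_pos.mpr ⟨e, Finset.mem_filter.mpr ⟨Finset.mem_univ _, he⟩⟩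
    exact_mod_cast this.ne'
  -- eigen-equation in incidence form
  have hK : ∀ F : V → ℝ, G.lap.mulVec F = lam • F → ∀ x : V, (G.deg x : ℝ) ≠ 0 →
      (∑ p ∈ (Finset.univ ×ˢ Finset.univ).filter
          (fun p : V × E => x ≠ p.1 ∧ G.sign x p.2 ≠ 0 ∧ G.sign p.1 p.2 ≠ 0),
        G.edgeSign p.2 * F p.1) = (1 - lam) * (G.deg x : ℝ) * F x := by
    intro F hF x hdx
    have h1 : (∑ y, G.lap x y * F y) = lam * F x := by
      have := congrFun hF x
      simpa [Matrix.mulVec, dotProduct] using this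
    have h2 : (∑ y, G.lap x y * F y)
        = F x - (∑ y, G.adj x y * F y) / (G.deg x : ℝ) := by
      simp only [SignedHypergraph.lap, Matrix.of_apply, sub_mul, ite_mul, one_mul, zero_mul,
        div_mul_eq_mul_div]
      rw [Finset.sum_sub_distrib, Finset.sum_ite_eq Finset.univ x F, ← Finset.sum_div]
      simp
    have h4 : (∑ y, G.adj x y * F y) / (G.deg x : ℝ) = F x - lam * F x := by
      rw [h2] at h1
      linarith
    rw [div_eq_iff hdx] at h4
    have h5 : (∑ y, G.adj x y * F y)
        = ∑ p ∈ (Finset.univ ×ˢ Finset.univ).filter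
            (fun p : V × E => x ≠ p.1 ∧ G.sign x p.2 ≠ 0 ∧ G.sign p.1 p.2 ≠ 0),
          G.edgeSign p.2 * F p.1 := by
      rw [Finset.sum_filter, Finset.sum_product]
      refine Finset.sum_congr rfl fun y _ => ?_
      simp only [SignedHypergraph.adj, Matrix.of_apply]
      by_cases hxy : x = y
      · simp [hxy]
      · rw [if_neg hxy, Finset.sum_mul, Finset.sum_filter]
        refine Finset.sum_congr rfl fun e _ => ?_
        by_cases hP : G.sign x e ≠ 0 ∧ G.sign y e ≠ 0
        · rw [if_pos hP, if_pos ⟨hxy, hP⟩]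
        · rw [if_neg hP, if_neg (fun hc => hP hc.2)]
    rw [← h5, h4]
    ring
  -- the incidence set of a vertex, restricted to the support
  set Om : V → Finset (V × E) := fun x => (Finset.univ ×ˢ Finset.univ).filter
      (fun p : V × E => x ≠ p.1 ∧ G.sign x p.2 ≠ 0 ∧ G.sign p.1 p.2 ≠ 0 ∧ f p.1 ≠ 0)
    with hOm
  have hmemOm : ∀ (x : V) (p : V × E), p ∈ Om x ↔
      (x ≠ p.1 ∧ G.sign x p.2 ≠ 0 ∧ G.sign p.1 p.2 ≠ 0 ∧ f p.1 ≠ 0) := by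
    intro x p
    rw [hOm]
    beta_reduce
    simp [Finset.mem_filter]
  have hrestrict : ∀ F : V → ℝ, (∀ y, f y = 0 → F y = 0) → ∀ x : V,
      (∑ p ∈ Om x, G.edgeSign p.2 * F p.1)
      = ∑ p ∈ (Finset.univ ×ˢ Finset.univ).filter
          (fun p : V × E => x ≠ p.1 ∧ G.sign x p.2 ≠ 0 ∧ G.sign p.1 p.2 ≠ 0),
        G.edgeSign p.2 * F p.1 := by
    intro F hF x
    rw [hOm]
    beta_reduce
    apply Finset.sum_subset
    · intro p hp
      rcases Finset.mem_filter.mp hp with ⟨hmemu, h1, h2, h3, h4⟩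
      exact Finset.mem_filter.mpr ⟨hmemu, h1, h2, h3⟩
    · intro p hp hnp
      rcases Finset.mem_filter.mp hp with ⟨hpu, hp1, hp2, hp3⟩
      have hfp : f p.1 = 0 := by
        by_contra hc
        exact hnp (Finset.mem_filter.mpr ⟨hpu, hp1, hp2, hp3, hc⟩)
      rw [hF p.1 hfp, mul_zero]
  have hSf : ∀ (x : V) (e₀ : E), G.sign x e₀ ≠ 0 →
      (∑ p ∈ Om x, G.edgeSign p.2 * f p.1) = (1 - lam) * (G.deg x : ℝ) * f x := by
    intro x e₀ he
    rw [hrestrict f (fun y h => h) x]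
    exact hK f hf x (hdegnz x e₀ he)
  have hSg : ∀ (x : V) (e₀ : E), G.sign x e₀ ≠ 0 →
      (∑ p ∈ Om x, G.edgeSign p.2 * g p.1) = (1 - lam) * (G.deg x : ℝ) * g x := by
    intro x e₀ he
    rw [hrestrict g hgzero x]
    exact hK g hg x (hdegnz x e₀ he)
  have hSg' : ∀ (x : V) (e₀ : E), G.sign x e₀ ≠ 0 →
      (∑ p ∈ Om x, (G.edgeSign p.2 * f p.1) * a (jV p.1))
        = (1 - lam) * (G.deg x : ℝ) * g x := by
    intro x e₀ he
    rw [← hSg x e₀ he]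
    refine Finset.sum_congr rfl fun p hp => ?_
    rw [hgsupp p.1 ((hmemOm x p).mp hp).2.2.2]
    ring
  -- same-sign incidences at a zero vertex lie in the same domain
  have hsameSide : ∀ z : V, f z = 0 → ∀ p q : V × E, p ∈ Om z → q ∈ Om z →
      0 < (G.edgeSign p.2 * f p.1) * (G.edgeSign q.2 * f q.1) → jV p.1 = jV q.1 := by
    intro z hz p q hp hq hpos
    rcases (hmemOm z p).mp hp with ⟨hzp, hp1, hp2, hp3⟩
    rcases (hmemOm z q).mp hq with ⟨hzq, hq1, hq2, hq3⟩
    have hwalk : G.NWalk f 2 (fun k => if k = 0 then p.1 else if k = 1 then z else q.1)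
        (fun t => if t = 0 then p.2 else q.2) := by
      apply SignedHypergraph.mkNWalk
      · intro t ht
        interval_cases t
        · simpa using ⟨hp2, hp1⟩
        · simpa using ⟨hq1, hq2⟩
      · intro k h1 h2
        interval_cases k
        simpa using hz
      · intro h0 h2
        have hIco : Finset.Ico 0 2 = {0, 1} := rfl
        rw [hIco]
        simp only [Finset.prod_insert (by simp : (0:ℕ) ∉ ({1} : Finset ℕ)),
          Finset.prod_singleton]
        norm_num
        nlinarith [hpos]
    have hrel := hwalk.wrel
    simp only [show (2:ℕ) ≠ 0 by norm_num, show (2:ℕ) ≠ 1 by norm_num] at hrel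
    norm_num at hrel
    exact hjEq p.1 q.1 hp3 hq3 hrel
  -- opposite incidence exists at a zero vertex
  have hopp : ∀ z : V, f z = 0 → ∀ p : V × E, p ∈ Om z →
      ∃ q ∈ Om z, (G.edgeSign p.2 * f p.1) * (G.edgeSign q.2 * f q.1) < 0 := by
    intro z hz p hp
    rcases (hmemOm z p).mp hp with ⟨hzp, hp1, hp2, hp3⟩
    have hsum : (∑ r ∈ Om z, G.edgeSign r.2 * f r.1) = 0 := by
      rw [hSf z p.2 hp1, hz]
      ring
    by_contra hcon
    push_neg at hcon
    have hpnz : G.edgeSign p.2 * f p.1 ≠ 0 :=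
      mul_ne_zero (G.edgeSign_ne_zero p.2) hp3
    rcases hpnz.lt_or_gt with hneg | hpos
    · have hall' : ∀ r ∈ Om z, G.edgeSign r.2 * f r.1 ≤ 0 := by
        intro r hr
        by_contra hc
        push_neg at hc
        have := hcon r hr
        nlinarith
      have : (∑ r ∈ Om z, G.edgeSign r.2 * f r.1) < 0 := by
        have hle := Finset.sum_le_sum hall'
        rw [Finset.sum_const_zero] at hle
        rcases lt_or_eq_of_le hle with h | h
        · exact h
        · exfalso
          have := (Finset.sum_eq_zero_iff_of_nonpos hall').mp h p hp
          exact hpnz this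
      rw [hsum] at this
      exact lt_irrefl 0 this
    · have hall' : ∀ r ∈ Om z, 0 ≤ G.edgeSign r.2 * f r.1 := by
        intro r hr
        by_contra hc
        push_neg at hc
        have := hcon r hr
        nlinarith
      have : 0 < (∑ r ∈ Om z, G.edgeSign r.2 * f r.1) := by
        refine Finset.sum_pos' hall' ⟨p, hp, hpos⟩
      rw [hsum] at this
      exact lt_irrefl 0 this
  -- the two sides of a zero vertex carry equal coefficients
  have hLemZ : ∀ z : V, f z = 0 → ∀ p q : V × E, p ∈ Om z → q ∈ Om z →
      a (jV p.1) = a (jV q.1) := by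
    intro z hz
    have hhelp : ∀ p q : V × E, p ∈ Om z → q ∈ Om z →
        0 < G.edgeSign p.2 * f p.1 → G.edgeSign q.2 * f q.1 < 0 →
        a (jV p.1) = a (jV q.1) := by
      intro p q hp hq hpp hqn
      rcases (hmemOm z p).mp hp with ⟨hzp, hp1, hp2, hp3⟩
      have hsum : (∑ r ∈ Om z, G.edgeSign r.2 * f r.1) = 0 := by
        rw [hSf z p.2 hp1, hz]; ring
      have hsuma : (∑ r ∈ Om z, (G.edgeSign r.2 * f r.1) * a (jV r.1)) = 0 := by
        rw [hSg' z p.2 hp1, hgzero z hz]; ring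
      set P := (Om z).filter (fun r => 0 < G.edgeSign r.2 * f r.1) with hP
      set N := (Om z).filter (fun r => ¬ 0 < G.edgeSign r.2 * f r.1) with hN
      have hsplit : (∑ r ∈ P, G.edgeSign r.2 * f r.1) + (∑ r ∈ N, G.edgeSign r.2 * f r.1)
          = 0 := by
        rw [hP, hN, Finset.sum_filter_add_sum_filter_not]
        exact hsum
      have hβ : 0 < ∑ r ∈ P, G.edgeSign r.2 * f r.1 := by
        refine Finset.sum_pos ?_ ⟨p, Finset.mem_filter.mpr ⟨hp, hpp⟩⟩
        intro r hr
        exact (Finset.mem_filter.mp hr).2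
      have hPj : ∀ r ∈ P, a (jV r.1) = a (jV p.1) := by
        intro r hr
        rcases Finset.mem_filter.mp hr with ⟨hrm, hrpos⟩
        exact congrArg a (hsameSide z hz r p hrm hp (mul_pos hrpos hpp))
      have hNj : ∀ r ∈ N, a (jV r.1) = a (jV q.1) := by
        intro r hr
        rcases Finset.mem_filter.mp hr with ⟨hrm, hrpos⟩
        have hrnz : G.edgeSign r.2 * f r.1 ≠ 0 :=
          mul_ne_zero (G.edgeSign_ne_zero r.2) ((hmemOm z r).mp hrm).2.2.2
        have hrneg : G.edgeSign r.2 * f r.1 < 0 := by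
          rcases hrnz.lt_or_gt with h | h
          · exact h
          · exact absurd h hrpos
        exact congrArg a (hsameSide z hz r q hrm hq (mul_pos_of_neg_of_neg hrneg hqn))
      have hsplita : (∑ r ∈ P, (G.edgeSign r.2 * f r.1) * a (jV r.1))
          + (∑ r ∈ N, (G.edgeSign r.2 * f r.1) * a (jV r.1)) = 0 := by
        rw [hP, hN, Finset.sum_filter_add_sum_filter_not]
        exact hsuma
      have hPs : (∑ r ∈ P, (G.edgeSign r.2 * f r.1) * a (jV r.1))
          = (∑ r ∈ P, G.edgeSign r.2 * f r.1) * a (jV p.1) := by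
        rw [Finset.sum_mul]
        exact Finset.sum_congr rfl fun r hr => by rw [hPj r hr]
      have hNs : (∑ r ∈ N, (G.edgeSign r.2 * f r.1) * a (jV r.1))
          = (∑ r ∈ N, G.edgeSign r.2 * f r.1) * a (jV q.1) := by
        rw [Finset.sum_mul]
        exact Finset.sum_congr rfl fun r hr => by rw [hNj r hr]
      rw [hPs, hNs] at hsplita
      have hNsum : (∑ r ∈ N, G.edgeSign r.2 * f r.1)
          = - ∑ r ∈ P, G.edgeSign r.2 * f r.1 := by linarith
      rw [hNsum] at hsplita
      have : ((∑ r ∈ P, G.edgeSign r.2 * f r.1)) * (a (jV p.1) - a (jV q.1)) = 0 := by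
        linarith [hsplita]
      rcases mul_eq_zero.mp this with h | h
      · exact absurd h hβ.ne'
      · linarith
    intro p q hp hq
    have hpnz : G.edgeSign p.2 * f p.1 ≠ 0 :=
      mul_ne_zero (G.edgeSign_ne_zero p.2) ((hmemOm z p).mp hp).2.2.2
    have hqnz : G.edgeSign q.2 * f q.1 ≠ 0 :=
      mul_ne_zero (G.edgeSign_ne_zero q.2) ((hmemOm z q).mp hq).2.2.2
    rcases hpnz.lt_or_gt with hpn | hpp
    · rcases hqnz.lt_or_gt with hqn | hqp
      · exact congrArg a (hsameSide z hz p q hp hq (mul_pos_of_neg_of_neg hpn hqn))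
      · exact (hhelp q p hq hp hqp hpn).symm
    · rcases hqnz.lt_or_gt with hqn | hqp
      · exact hhelp p q hp hq hpp hqn
      · exact congrArg a (hsameSide z hz p q hp hq (mul_pos hpp hqp))
  -- maximum principle across a direct support-support edge
  have hMP : ∀ x : V, f x ≠ 0 → a (jV x) = α → ∀ q : V × E, q ∈ Om x →
      a (jV q.1) = α := by
    intro x hx hxα q hq
    rcases (hmemOm x q).mp hq with ⟨hxq, hq1, hq2, hq3⟩
    have hT : (∑ r ∈ Om x, (f x * (G.edgeSign r.2 * f r.1)) * (α - a (jV r.1))) = 0 := by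
      have hexp : ∀ r : V × E, (f x * (G.edgeSign r.2 * f r.1)) * (α - a (jV r.1))
          = (f x * α) * (G.edgeSign r.2 * f r.1)
            - f x * ((G.edgeSign r.2 * f r.1) * a (jV r.1)) := by
        intro r; ring
      rw [Finset.sum_congr rfl fun r _ => hexp r, Finset.sum_sub_distrib,
        ← Finset.mul_sum, ← Finset.mul_sum, hSf x q.2 hq1, hSg' x q.2 hq1,
        hgsupp x hx, hxα]
      ring
    have hnonpos : ∀ r ∈ Om x, (f x * (G.edgeSign r.2 * f r.1)) * (α - a (jV r.1)) ≤ 0 := by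
      intro r hr
      rcases (hmemOm x r).mp hr with ⟨hxr, hr1, hr2, hr3⟩
      by_cases hjr : jV r.1 = jV x
      · rw [hjr, hxα]
        simp
      · have hneg : f x * (G.edgeSign r.2 * f r.1) < 0 := by
          have hne : f x * (G.edgeSign r.2 * f r.1) ≠ 0 :=
            mul_ne_zero hx (mul_ne_zero (G.edgeSign_ne_zero r.2) hr3)
          rcases hne.lt_or_gt with h | h
          · exact h
          · exfalso
            apply hjr
            symm
            have hwalk : G.NWalk f 1 (fun k => if k = 0 then x else r.1) (fun _ => r.2) := by
              apply SignedHypergraph.mkNWalk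
              · intro t ht
                interval_cases t
                simpa using ⟨hr1, hr2⟩
              · intro k hk1 hk2
                omega
              · intro h0 h1
                have hIco : Finset.Ico 0 1 = {0} := rfl
                rw [hIco, Finset.prod_singleton]
                simp only [show (1:ℕ) ≠ 0 by norm_num]
                norm_num
                nlinarith
            have hrel := hwalk.wrel
            norm_num at hrel
            exact hjEq x r.1 hx hr3 hrel
        nlinarith [hmax (jV r.1)]
    have hzero := (Finset.sum_eq_zero_iff_of_nonpos hnonpos).mp hT q hq
    have hne : f x * (G.edgeSign q.2 * f q.1) ≠ 0 :=
      mul_ne_zero hx (mul_ne_zero (G.edgeSign_ne_zero q.2) hq3)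
    rcases mul_eq_zero.mp hzero with h | h
    · exact absurd h hne
    · linarith
  -- the chain lemma: propagation across a run of zeros
  have hchain : ∀ (n : ℕ) (u : ℕ → V) (ε : ℕ → E), 1 ≤ n →
      (∀ t, t < n → G.sign (u t) (ε t) ≠ 0 ∧ G.sign (u (t+1)) (ε t) ≠ 0) →
      (∀ k, 0 < k → k < n → f (u k) = 0) →
      f (u 0) ≠ 0 → f (u n) ≠ 0 → a (jV (u 0)) = α → a (jV (u n)) = α := by
    intro n u ε hn hW hzero h0 hne h0α
    by_cases hjj : jV (u 0) = jV (u n)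
    · rw [← hjj]
      exact h0α
    have hprodnz : (∏ t ∈ Finset.Ico 0 n, G.edgeSign (ε t)) ≠ 0 :=
      Finset.prod_ne_zero_iff.mpr fun t _ => G.edgeSign_ne_zero (ε t)
    have hPneg : f (u 0) * (∏ t ∈ Finset.Ico 0 n, G.edgeSign (ε t)) * f (u n) < 0 := by
      have hne' : f (u 0) * (∏ t ∈ Finset.Ico 0 n, G.edgeSign (ε t)) * f (u n) ≠ 0 :=
        mul_ne_zero (mul_ne_zero h0 hprodnz) hne
      rcases hne'.lt_or_gt with h | h
      · exact h
      · exfalso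
        apply hjj
        have hwalk : G.NWalk f n u ε :=
          SignedHypergraph.mkNWalk G f n u ε hW hzero (fun _ _ => h)
        exact hjEq (u 0) (u n) h0 hne hwalk.wrel
    rcases Nat.eq_or_lt_of_le hn with h1 | h2
    · -- n = 1 : direct edge, use the maximum principle
      have hq : ((u 1, ε 0) : V × E) ∈ Om (u 0) := by
        rw [hmemOm]
        refine ⟨?_, (hW 0 (by omega)).1, (hW 0 (by omega)).2, ?_⟩
        · intro hequ
          apply hjj
          rw [← h1]
          exact congrArg jV hequ
        · rw [← h1] at hne
          exact hne
      have := hMP (u 0) h0 h0α (u 1, ε 0) hq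
      rw [← h1]
      exact this
    · -- n ≥ 2 : the second vertex is a zero; switch sides there
      have hz1 : f (u 1) = 0 := hzero 1 (by omega) (by omega)
      have hpmem : ((u 0, ε 0) : V × E) ∈ Om (u 1) := by
        rw [hmemOm]
        refine ⟨?_, (hW 0 (by omega)).2, (hW 0 (by omega)).1, h0⟩
        intro hequ
        have hequ' : u 1 = u 0 := hequ
        rw [hequ'] at hz1
        exact h0 hz1
      obtain ⟨q, hqmem, hpq⟩ := hopp (u 1) hz1 (u 0, ε 0) hpmem
      rcases (hmemOm (u 1) q).mp hqmem with ⟨hzq, hq1, hq2, hq3⟩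
      have haq : a (jV q.1) = α := by
        rw [hLemZ (u 1) hz1 q (u 0, ε 0) hqmem hpmem]
        exact h0α
      -- the switched walk
      set v : ℕ → V := fun k => if k = 0 then q.1 else u k with hv
      set ε' : ℕ → E := fun t => if t = 0 then q.2 else ε t with hε'
      have hv0 : v 0 = q.1 := by simp [hv]
      have hvk : ∀ k, k ≠ 0 → v k = u k := by
        intro k hk
        rw [hv]
        beta_reduce
        rw [if_neg hk]
      have hε'0 : ε' 0 = q.2 := by simp [hε']
      have hε't : ∀ t, t ≠ 0 → ε' t = ε t := by
        intro t ht
        rw [hε']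
        beta_reduce
        rw [if_neg ht]
      have hW' : ∀ t, t < n → G.sign (v t) (ε' t) ≠ 0 ∧ G.sign (v (t+1)) (ε' t) ≠ 0 := by
        intro t ht
        rcases Nat.eq_zero_or_pos t with rfl | htpos
        · rw [hv0, hε'0, hvk 1 (by omega)]
          exact ⟨hq2, hq1⟩
        · rw [hvk t (by omega), hvk (t+1) (by omega), hε't t (by omega)]
          exact hW t ht
      have hzero' : ∀ k, 0 < k → k < n → f (v k) = 0 := by
        intro k hk1 hk2
        rw [hvk k (by omega)]
        exact hzero k hk1 hk2
      have hvn : v n = u n := hvk n (by omega)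
      -- sign computation
      have hIcoSplit : ∀ F : ℕ → ℝ, (∏ t ∈ Finset.Ico 0 n, F t)
          = F 0 * ∏ t ∈ Finset.Ico 1 n, F t := by
        intro F
        have hins : Finset.Ico 0 n = insert 0 (Finset.Ico 1 n) := by
          ext k
          simp only [Finset.mem_Ico, Finset.mem_insert]
          omega
        rw [hins, Finset.prod_insert (by simp)]
      have hP1 : (∏ t ∈ Finset.Ico 1 n, G.edgeSign (ε' t))
          = ∏ t ∈ Finset.Ico 1 n, G.edgeSign (ε t) := by
        refine Finset.prod_congr rfl fun t ht => ?_
        rw [hε't t (by simp only [Finset.mem_Ico] at ht; omega)]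
      have hprod' : (∏ t ∈ Finset.Ico 0 n, G.edgeSign (ε' t))
          = G.edgeSign q.2 * ∏ t ∈ Finset.Ico 1 n, G.edgeSign (ε t) := by
        rw [hIcoSplit (fun t => G.edgeSign (ε' t)), hε'0, hP1]
      have hprodo : (∏ t ∈ Finset.Ico 0 n, G.edgeSign (ε t))
          = G.edgeSign (ε 0) * ∏ t ∈ Finset.Ico 1 n, G.edgeSign (ε t) := by
        rw [hIcoSplit (fun t => G.edgeSign (ε t))]
      set P1 := ∏ t ∈ Finset.Ico 1 n, G.edgeSign (ε t) with hP1def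
      have hP1nz : P1 ≠ 0 := Finset.prod_ne_zero_iff.mpr fun t _ => G.edgeSign_ne_zero (ε t)
      have hB : f (u 0) * (G.edgeSign (ε 0) * P1) * f (u n) < 0 := by
        rw [← hprodo]
        exact hPneg
      have hC : (G.edgeSign (ε 0) * f (u 0)) * (G.edgeSign q.2 * f q.1) < 0 := hpq
      have hApos : 0 < f q.1 * (G.edgeSign q.2 * P1) * f (u n) := by
        have hsq : 0 < (P1 * f (u n))^2 :=
          lt_of_le_of_ne (sq_nonneg _) (Ne.symm (pow_ne_zero 2 (mul_ne_zero hP1nz hne)))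
        nlinarith
      have hwalk : G.NWalk f n v ε' := by
        apply SignedHypergraph.mkNWalk G f n v ε' hW' hzero'
        intro hh0 hhn
        rw [hv0, hvn, hprod']
        exact hApos
      have hrel := hwalk.wrel
      rw [hv0, hvn] at hrel
      rw [← hjEq q.1 (u n) hq3 hne hrel]
      exact haq
  -- propagation along arbitrary walks
  have hprop : ∀ (n : ℕ) (u : ℕ → V) (ε : ℕ → E),
      (∀ t, t < n → G.sign (u t) (ε t) ≠ 0 ∧ G.sign (u (t+1)) (ε t) ≠ 0) →
      f (u 0) ≠ 0 → f (u n) ≠ 0 → a (jV (u 0)) = α → a (jV (u n)) = α := by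
    intro n
    induction n using Nat.strong_induction_on with
    | _ n IH =>
      intro u ε hW h0 hn h0α
      rcases Nat.eq_zero_or_pos n with rfl | hpos
      · exact h0α
      have hex : ∃ k, 1 ≤ k ∧ k ≤ n ∧ f (u k) ≠ 0 := ⟨n, hpos, le_refl n, hn⟩
      set k₁ := Nat.find hex with hk₁
      obtain ⟨hk1a, hk1b, hk1c⟩ := Nat.find_spec hex
      have hzero : ∀ k, 0 < k → k < k₁ → f (u k) = 0 := by
        intro k hpos' hlt
        by_contra hc
        exact Nat.find_min hex hlt ⟨hpos', by omega, hc⟩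
      have hstep : a (jV (u k₁)) = α :=
        hchain k₁ u ε hk1a (fun t ht => hW t (by omega)) hzero h0 hk1c h0α
      rcases Nat.eq_or_lt_of_le hk1b with heq | hlt
      · rw [← heq]
        exact hstep
      · have hIH := IH (n - k₁) (by omega) (fun s => u (k₁ + s)) (fun s => ε (k₁ + s))
          ?_ ?_ ?_ ?_
        · beta_reduce at hIH
          rwa [show k₁ + (n - k₁) = n by omega] at hIH
        · intro t ht
          exact hW (k₁ + t) (by omega)
        · exact hk1c
        · beta_reduce
          rw [show k₁ + (n - k₁) = n by omega]
          exact hn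
        · exact hstep
  -- convert connectivity to walks
  have hwalkex : ∀ x y : V, Relation.ReflTransGen G.Adjacent x y →
      x = y ∨ ∃ (n : ℕ) (u : ℕ → V) (ε : ℕ → E),
        (∀ t, t < n → G.sign (u t) (ε t) ≠ 0 ∧ G.sign (u (t+1)) (ε t) ≠ 0)
        ∧ u 0 = x ∧ u n = y := by
    intro x y h
    induction h with
    | refl => exact Or.inl rfl
    | @tail b c hxb hbc ih =>
      obtain ⟨e, hbe, hce⟩ := hbc
      rcases ih with rfl | ⟨n, u, ε, hW, hu0, hun⟩
      · right
        refine ⟨1, (fun k => if k = 0 then x else c), fun _ => e, ?_, by norm_num, by norm_num⟩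
        intro t ht
        interval_cases t
        simpa using ⟨hbe, hce⟩
      · right
        refine ⟨n + 1, (fun k => if k ≤ n then u k else c), fun t => if t < n then ε t else e,
          ?_, ?_, ?_⟩
        · intro t ht
          beta_reduce
          rcases Nat.lt_or_ge t n with htn | htn
          · rw [if_pos htn, if_pos (by omega : t ≤ n), if_pos (by omega : t + 1 ≤ n)]
            exact hW t htn
          · have htn' : t = n := by omega
            subst htn'
            rw [if_neg (by omega : ¬ t < t), if_pos (le_refl t), if_neg (by omega : ¬ t + 1 ≤ t),
              hun]
            exact ⟨hbe, hce⟩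
        · beta_reduce
          rw [if_pos (by omega : 0 ≤ n)]
          exact hu0
        · beta_reduce
          rw [if_neg (by omega : ¬ n + 1 ≤ n)]
  -- conclude
  have hjw : ∀ i : Fin m, jV (w i) = i := by
    intro i
    refine (huniq (w i) i (hw i) ?_).symm
    rw [hD i]
    exact ⟨w i, hw i, Or.inl rfl, Or.inl rfl⟩
  have hkey : ∀ k : Fin m, a k = α := by
    intro k
    have hstart : a (jV (w i₀)) = α := by rw [hjw i₀]
    rcases hwalkex (w i₀) (w k) (hconn (w i₀) (w k)) with heq | ⟨n, u, ε, hW, hu0, hun⟩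
    · rw [← hjw k, ← heq, hjw i₀]
    · have := hprop n u ε hW (by rw [hu0]; exact hw i₀) (by rw [hun]; exact hw k)
        (by rw [hu0]; exact hstart)
      rw [hun, hjw k] at this
      exact this
  rw [hkey i1, hkey j1]
end

section
/- Let A = [[B, a],[aᵀ, b]] be an n×n partitioned real symmetric matrix with B of size (n−1)×(n−1), a ∈ ℝ^{n−1}, and b ∈ ℝ. If there exists u ∈ ℝ^{n−1} with Bu = 0 and aᵀu ≠ 0, then the positive index of inertia satisfies p_A = p_B + 1. -/
attribute [local instance] Classical.propDecidable

open Finset Matrix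

section FiedlerAux
open Polynomial Module

section aux
variable {m : Type} [Fintype m] [DecidableEq m]

lemma charpoly_similar (P M Q : Matrix m m ℝ)
    (hPQ : P * Q = 1) : (P * M * Q).charpoly = M.charpoly := by
  have key : charmatrix (P * M * Q) = P.map C * charmatrix M * Q.map C := by
    simp only [charmatrix, Matrix.mul_sub, Matrix.sub_mul]
    congr 1
    · rw [Matrix.scalar_apply, ← Matrix.smul_one_eq_diagonal, Matrix.mul_smul, Matrix.smul_mul]
      congr 1
      rw [Matrix.mul_one, ← Matrix.map_mul, hPQ, Matrix.map_one _ (map_zero C) (map_one C)]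
    · simp only [RingHom.mapMatrix_apply]
      rw [← Matrix.map_mul, ← Matrix.map_mul]
  have hdet : (P.map C).det * (Q.map C).det = 1 := by
    rw [← det_mul, ← Matrix.map_mul, hPQ, Matrix.map_one _ (map_zero C) (map_one C), det_one]
  calc (P * M * Q).charpoly = (P.map C).det * (charmatrix M).det * (Q.map C).det := by
        rw [Matrix.charpoly, key, det_mul, det_mul]
    _ = (charmatrix M).det * ((P.map C).det * (Q.map C).det) := by ring
    _ = M.charpoly := by rw [hdet, mul_one, Matrix.charpoly]

lemma charpoly_diagonal' (d : m → ℝ) :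
    (Matrix.diagonal d).charpoly = ∏ i, (X - C (d i)) := by
  have h : charmatrix (Matrix.diagonal d) = Matrix.diagonal (fun i => X - C (d i)) := by
    ext i j
    by_cases h : i = j
    · subst h; simp
    · simp [Matrix.charmatrix_apply_ne _ _ _ h, Matrix.diagonal_apply_ne _ h,
        Matrix.diagonal_apply_ne d h]
  rw [Matrix.charpoly, h, det_diagonal]

lemma charpoly_eq_prod_eigenvalues {M : Matrix m m ℝ} (hM : M.IsHermitian) :
    M.charpoly = ∏ i, (X - C (hM.eigenvalues i)) := by
  have h1 : (hM.eigenvectorUnitary : Matrix m m ℝ) * star (hM.eigenvectorUnitary : Matrix m m ℝ)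
      = 1 := Matrix.mem_unitaryGroup_iff.mp hM.eigenvectorUnitary.2
  have : M.charpoly = (Matrix.diagonal (RCLike.ofReal ∘ hM.eigenvalues : m → ℝ)).charpoly := by
    conv_lhs => rw [hM.spectral_theorem]
    exact charpoly_similar _ _ _ h1
  rw [this]
  have h2 : (RCLike.ofReal ∘ hM.eigenvalues : m → ℝ) = hM.eigenvalues := by
    funext i; simp
  rw [h2, charpoly_diagonal']

lemma posInertia_eq_card {M : Matrix m m ℝ} (hM : M.IsHermitian) :
    posInertia M = Fintype.card {i // 0 < hM.eigenvalues i} := by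
  unfold posInertia
  rw [charpoly_eq_prod_eigenvalues hM]
  have : (∏ i, (X - C (hM.eigenvalues i))) =
      ((Finset.univ.val.map hM.eigenvalues).map (fun a => X - C a)).prod := by
    rw [Multiset.map_map]
    rfl
  rw [this, Polynomial.roots_multiset_prod_X_sub_C]
  rw [← Multiset.countP_eq_card_filter, Multiset.countP_map]
  rw [Fintype.card_subtype, Finset.card_def, Finset.filter_val]

end aux

section aux2
variable {m : Type} [Fintype m] [DecidableEq m]

lemma quad_mulVec_eq {M : Matrix m m ℝ} (hM : M.IsHermitian) (y : m → ℝ) :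
    ((hM.eigenvectorUnitary : Matrix m m ℝ) *ᵥ y) ⬝ᵥ
      (M *ᵥ ((hM.eigenvectorUnitary : Matrix m m ℝ) *ᵥ y)) =
    ∑ i, hM.eigenvalues i * (y i)^2 := by
  set U : Matrix m m ℝ := (hM.eigenvectorUnitary : Matrix m m ℝ) with hU
  have hUU : star U * U = 1 := Matrix.mem_unitaryGroup_iff'.mp hM.eigenvectorUnitary.2
  have hsU : star U = Uᵀ := by
    rw [Matrix.star_eq_conjTranspose, Matrix.conjTranspose_eq_transpose_of_trivial]
  have hMU : M * U = U * Matrix.diagonal hM.eigenvalues := by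
    conv_lhs => rw [hM.spectral_theorem, Unitary.conjStarAlgAut_apply]
    have : (RCLike.ofReal ∘ hM.eigenvalues : m → ℝ) = hM.eigenvalues := by funext i; simp
    rw [this, mul_assoc, mul_assoc, hUU, mul_one]
  rw [Matrix.mulVec_mulVec, hMU, ← Matrix.mulVec_mulVec]
  rw [Matrix.dotProduct_mulVec]
  have : (U *ᵥ y) ᵥ* U = y ᵥ* (Uᵀ * U) := by
    rw [← Matrix.vecMul_vecMul, Matrix.vecMul_transpose]
  rw [this, ← hsU, hUU, Matrix.vecMul_one]
  simp only [Matrix.mulVec_diagonal, dotProduct]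
  exact Finset.sum_congr rfl fun i _ => by ring

end aux2

section aux3
variable {m : Type} [Fintype m] [DecidableEq m]

attribute [local instance] Classical.propDecidable

/-- The linear equivalence given by an orthogonal matrix. -/
noncomputable def unitaryEquiv {M : Matrix m m ℝ} (hM : M.IsHermitian) :
    (m → ℝ) ≃ₗ[ℝ] (m → ℝ) :=
  LinearEquiv.ofLinear (Matrix.mulVecLin (hM.eigenvectorUnitary : Matrix m m ℝ))
    (Matrix.mulVecLin (star (hM.eigenvectorUnitary : Matrix m m ℝ)))
    (by rw [← Matrix.mulVecLin_mul,
          Matrix.mem_unitaryGroup_iff.mp hM.eigenvectorUnitary.2, Matrix.mulVecLin_one])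
    (by rw [← Matrix.mulVecLin_mul,
          Matrix.mem_unitaryGroup_iff'.mp hM.eigenvectorUnitary.2, Matrix.mulVecLin_one])

/-- The span of coordinate vectors indexed by `{i | p i}`. -/
noncomputable def coordSpan (p : m → Prop) : Submodule ℝ (m → ℝ) :=
  Submodule.span ℝ (Set.range fun i : {i // p i} => Pi.single (i : m) (1 : ℝ))

lemma coordSpan_finrank (p : m → Prop) :
    Module.finrank ℝ (coordSpan p) = Fintype.card {i // p i} := by
  apply finrank_span_eq_card
  have h := (Pi.basisFun ℝ m).linearIndependent
  have : (fun i : {i // p i} => Pi.single (i : m) (1 : ℝ)) =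
      (fun i : m => Pi.single i (1:ℝ)) ∘ (fun i : {i // p i} => (i : m)) := rfl
  rw [this]
  apply LinearIndependent.comp _ _ Subtype.coe_injective
  convert h using 1
  funext i
  simp [Pi.basisFun_apply]

lemma coordSpan_support {p : m → Prop} {y : m → ℝ} (hy : y ∈ coordSpan p) :
    ∀ i, ¬ p i → y i = 0 := by
  have : coordSpan p ≤ ⨅ (i : m) (_ : ¬ p i), LinearMap.ker (LinearMap.proj (R := ℝ)
      (φ := fun _ : m => ℝ) i) := by
    rw [coordSpan, Submodule.span_le]
    rintro _ ⟨j, rfl⟩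
    simp only [SetLike.mem_coe, Submodule.mem_iInf, LinearMap.mem_ker, LinearMap.proj_apply]
    intro i hi
    exact Pi.single_eq_of_ne (fun h : i = (j:m) => hi (h ▸ j.2)) 1
  intro i hi
  have := this hy
  simp only [Submodule.mem_iInf, LinearMap.mem_ker, LinearMap.proj_apply] at this
  exact this i hi

end aux3

section aux4
variable {m : Type} [Fintype m] [DecidableEq m]

attribute [local instance] Classical.propDecidable


lemma exists_posdef_subspace_card {M : Matrix m m ℝ} (hM : M.IsHermitian) :
    ∃ W : Submodule ℝ (m → ℝ),
      Module.finrank ℝ W = Fintype.card {i // 0 < hM.eigenvalues i} ∧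
      ∀ x ∈ W, x ≠ 0 → 0 < x ⬝ᵥ (M *ᵥ x) := by
  refine ⟨(coordSpan fun i => 0 < hM.eigenvalues i).map (unitaryEquiv hM : (m → ℝ) →ₗ[ℝ] (m → ℝ)),
    ?_, ?_⟩
  · rw [LinearEquiv.finrank_map_eq, coordSpan_finrank]
  · rintro x hx hx0
    obtain ⟨y, hy, rfl⟩ := hx
    have hy0 : y ≠ 0 := by
      rintro rfl; exact hx0 (map_zero _)
    have hq : (unitaryEquiv hM : (m → ℝ) →ₗ[ℝ] (m → ℝ)) y ⬝ᵥ
        (M *ᵥ (unitaryEquiv hM : (m → ℝ) →ₗ[ℝ] (m → ℝ)) y) = ∑ i, hM.eigenvalues i * (y i)^2 :=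
      quad_mulVec_eq hM y
    rw [hq]
    obtain ⟨j, hj⟩ := Function.ne_iff.mp hy0
    have hjpos : 0 < hM.eigenvalues j := by
      by_contra h
      exact hj (coordSpan_support hy j h)
    refine Finset.sum_pos' (fun i _ => ?_) ⟨j, Finset.mem_univ j, ?_⟩
    · by_cases h : 0 < hM.eigenvalues i
      · positivity
      · rw [coordSpan_support hy i h]; ring_nf; exact le_refl 0
    · have hj' : y j ≠ 0 := by simpa using hj
      have : (0:ℝ) < (y j)^2 := by positivity
      exact mul_pos hjpos this

lemma posdef_subspace_le_card {M : Matrix m m ℝ} (hM : M.IsHermitian) (W : Submodule ℝ (m → ℝ))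
    (hW : ∀ x ∈ W, x ≠ 0 → 0 < x ⬝ᵥ (M *ᵥ x)) :
    Module.finrank ℝ W ≤ Fintype.card {i // 0 < hM.eigenvalues i} := by
  by_contra hlt
  push_neg at hlt
  set Z := (coordSpan fun i => ¬ 0 < hM.eigenvalues i).map
    (unitaryEquiv hM : (m → ℝ) →ₗ[ℝ] (m → ℝ)) with hZ
  have hZrank : Module.finrank ℝ Z =
      Fintype.card m - Fintype.card {i // 0 < hM.eigenvalues i} := by
    rw [hZ, LinearEquiv.finrank_map_eq, coordSpan_finrank, Fintype.card_subtype_compl]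
  have hcardle : Fintype.card {i // 0 < hM.eigenvalues i} ≤ Fintype.card m :=
    Fintype.card_subtype_le _
  have hsum := Submodule.finrank_sup_add_finrank_inf_eq W Z
  have hsup : Module.finrank ℝ ↥(W ⊔ Z) ≤ Fintype.card m := by
    have := Submodule.finrank_le (W ⊔ Z)
    rwa [Module.finrank_pi] at this
  have hinf : 0 < Module.finrank ℝ ↥(W ⊓ Z) := by omega
  have hne : W ⊓ Z ≠ ⊥ := by
    intro h
    rw [h, finrank_bot] at hinf
    omega
  obtain ⟨x, hxmem, hx0⟩ := (Submodule.ne_bot_iff _).mp hne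
  have hxW : x ∈ W := hxmem.1
  have hxZ : x ∈ Z := hxmem.2
  obtain ⟨y, hy, rfl⟩ := hxZ
  have hpos := hW _ hxW hx0
  have hq : (unitaryEquiv hM : (m → ℝ) →ₗ[ℝ] (m → ℝ)) y ⬝ᵥ
      (M *ᵥ (unitaryEquiv hM : (m → ℝ) →ₗ[ℝ] (m → ℝ)) y) = ∑ i, hM.eigenvalues i * (y i)^2 :=
    quad_mulVec_eq hM y
  rw [hq] at hpos
  have hnonpos : ∑ i, hM.eigenvalues i * (y i)^2 ≤ 0 := by
    apply Finset.sum_nonpos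
    intro i _
    by_cases h : 0 < hM.eigenvalues i
    · rw [coordSpan_support hy i (not_not_intro h)]; ring_nf; exact le_refl 0
    · have h1 : hM.eigenvalues i ≤ 0 := le_of_not_gt h
      have h2 : (0:ℝ) ≤ (y i)^2 := sq_nonneg _
      exact mul_nonpos_of_nonpos_of_nonneg h1 h2
  linarith

end aux4

section bridge
variable {m : Type} [Fintype m] [DecidableEq m]
attribute [local instance] Classical.propDecidable

lemma exists_posdef_subspace {M : Matrix m m ℝ} (hM : M.IsHermitian) :
    ∃ W : Submodule ℝ (m → ℝ), Module.finrank ℝ W = posInertia M ∧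
      ∀ x ∈ W, x ≠ 0 → 0 < x ⬝ᵥ (M *ᵥ x) := by
  obtain ⟨W, h1, h2⟩ := exists_posdef_subspace_card hM
  exact ⟨W, by rw [h1, posInertia_eq_card hM], h2⟩

lemma posdef_subspace_le {M : Matrix m m ℝ} (hM : M.IsHermitian) (W : Submodule ℝ (m → ℝ))
    (hW : ∀ x ∈ W, x ≠ 0 → 0 < x ⬝ᵥ (M *ᵥ x)) :
    Module.finrank ℝ W ≤ posInertia M := by
  rw [posInertia_eq_card hM]
  exact posdef_subspace_le_card hM W hW

end bridge

lemma isHermitian_of_isSymm {m : Type} [Fintype m] (M : Matrix m m ℝ) (h : M.IsSymm) :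
    M.IsHermitian := by
  rw [Matrix.IsHermitian, Matrix.conjTranspose_eq_transpose_of_trivial]
  exact h

lemma borderMatrix_isSymm {n : ℕ} {B : Matrix (Fin n) (Fin n) ℝ} {a : Fin n → ℝ} {b : ℝ}
    (hB : B.IsSymm) : (borderMatrix B a b).IsSymm := by
  rw [Matrix.IsSymm, borderMatrix, Matrix.fromBlocks_transpose]
  rw [show Bᵀ = B from hB]
  congr 1 <;> ext i j <;> simp

lemma border_quad {n : ℕ} (B : Matrix (Fin n) (Fin n) ℝ) (a : Fin n → ℝ) (b : ℝ)
    (v : Fin n ⊕ Unit → ℝ) :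
    v ⬝ᵥ (borderMatrix B a b *ᵥ v) =
      (v ∘ Sum.inl) ⬝ᵥ (B *ᵥ (v ∘ Sum.inl)) +
        2 * v (Sum.inr ()) * (a ⬝ᵥ (v ∘ Sum.inl)) + b * (v (Sum.inr ()))^2 := by
  simp only [dotProduct, Matrix.mulVec, borderMatrix, Fintype.sum_sum_type,
    Matrix.fromBlocks_apply₁₁, Matrix.fromBlocks_apply₁₂, Matrix.fromBlocks_apply₂₁,
    Matrix.fromBlocks_apply₂₂, Matrix.of_apply, Function.comp_apply, Finset.univ_unique,
    Finset.sum_singleton, PUnit.default_eq_unit]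
  have e1 : ∑ x, v (Sum.inl x) * (∑ y, B x y * v (Sum.inl y) + a x * v (Sum.inr PUnit.unit))
      = (∑ x, v (Sum.inl x) * ∑ y, B x y * v (Sum.inl y))
        + v (Sum.inr PUnit.unit) * ∑ x, a x * v (Sum.inl x) := by
    rw [Finset.mul_sum, ← Finset.sum_add_distrib]
    exact Finset.sum_congr rfl fun i _ => by ring
  rw [e1]
  ring

end FiedlerAux

set_option maxHeartbeats 1000000 in
set_option synthInstance.maxHeartbeats 400000 in
theorem stmt9 (n : ℕ) (B : Matrix (Fin n) (Fin n) ℝ) (a : Fin n → ℝ) (b : ℝ)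
    (hB : B.IsSymm) (u : Fin n → ℝ) (hu : B.mulVec u = 0) (hau : a ⬝ᵥ u ≠ 0) :
    posInertia (borderMatrix B a b) = posInertia B + 1 := by
  have hBh : B.IsHermitian := isHermitian_of_isSymm B hB
  have hAh : (borderMatrix B a b).IsHermitian := isHermitian_of_isSymm _ (borderMatrix_isSymm hB)
  set c : ℝ := a ⬝ᵥ u with hc
  have hc0 : c ≠ 0 := hau
  set t : ℝ := (1 - b) / (2 * c) with ht
  have htc : 2 * t * c + b = 1 := by
    rw [ht]; field_simp; ring
  have hBsym : ∀ x : Fin n → ℝ, u ⬝ᵥ (B *ᵥ x) = 0 := by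
    intro x
    rw [Matrix.dotProduct_mulVec, ← Matrix.mulVec_transpose, (show Bᵀ = B from hB), hu,
      zero_dotProduct]
  -- Direction ≥
  have hge : posInertia B + 1 ≤ posInertia (borderMatrix B a b) := by
    obtain ⟨W, hWrank, hWpos⟩ := exists_posdef_subspace hBh
    let aL : (Fin n → ℝ) →ₗ[ℝ] ℝ :=
      { toFun := fun x => a ⬝ᵥ x
        map_add' := fun x y => by simp [dotProduct_add]
        map_smul' := fun r x => by simp [dotProduct_smul] }
    let X : (↥W × ℝ) →ₗ[ℝ] (Fin n → ℝ) := W.subtype ∘ₗ LinearMap.fst ℝ ↥W ℝ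
    let sL : (↥W × ℝ) →ₗ[ℝ] ℝ := LinearMap.snd ℝ ↥W ℝ
    let φ : (↥W × ℝ) →ₗ[ℝ] ℝ := t • sL - c⁻¹ • (aL ∘ₗ X)
    let uM : ℝ →ₗ[ℝ] (Fin n → ℝ) := LinearMap.toSpanSingleton ℝ _ u
    let Ψ : (↥W × ℝ) →ₗ[ℝ] (Fin n ⊕ Unit → ℝ) :=
      (LinearEquiv.sumArrowLequivProdArrow (Fin n) Unit ℝ ℝ).symm.toLinearMap ∘ₗ
        LinearMap.prod (X + uM ∘ₗ φ) ((LinearEquiv.funUnique Unit ℝ ℝ).symm.toLinearMap ∘ₗ sL)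
    have hΨinl : ∀ p : ↥W × ℝ, (Ψ p) ∘ Sum.inl =
        (p.1 : Fin n → ℝ) + (t * p.2 - c⁻¹ * (a ⬝ᵥ (p.1 : Fin n → ℝ))) • u := by
      intro p
      funext i
      simp [Ψ, X, sL, φ, uM, aL, LinearEquiv.sumArrowLequivProdArrow,
        LinearMap.toSpanSingleton_apply]
    have hΨinr : ∀ p : ↥W × ℝ, (Ψ p) (Sum.inr ()) = p.2 := by
      intro p
      simp [Ψ, sL, LinearEquiv.sumArrowLequivProdArrow, LinearEquiv.funUnique]
    have key : ∀ p : ↥W × ℝ, (Ψ p) ⬝ᵥ (borderMatrix B a b *ᵥ Ψ p) =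
        (p.1 : Fin n → ℝ) ⬝ᵥ (B *ᵥ (p.1 : Fin n → ℝ)) + p.2 ^ 2 := by
      intro p
      rw [border_quad, hΨinl, hΨinr]
      set x : Fin n → ℝ := (p.1 : Fin n → ℝ)
      set s : ℝ := p.2
      set α : ℝ := t * s - c⁻¹ * (a ⬝ᵥ x) with hα
      have h1 : B *ᵥ (x + α • u) = B *ᵥ x := by
        rw [Matrix.mulVec_add, Matrix.mulVec_smul, hu, smul_zero, add_zero]
      have h2 : (x + α • u) ⬝ᵥ (B *ᵥ (x + α • u)) = x ⬝ᵥ (B *ᵥ x) := by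
        rw [h1, add_dotProduct, smul_dotProduct, hBsym, smul_zero, add_zero]
      have h3 : a ⬝ᵥ (x + α • u) = a ⬝ᵥ x + α * c := by
        rw [dotProduct_add, dotProduct_smul, smul_eq_mul, hc]
      rw [h2, h3, hα]
      have hcinv : c⁻¹ * c = 1 := inv_mul_cancel₀ hc0
      linear_combination s^2 * htc - 2*s*(a ⬝ᵥ x) * hcinv
    have hinj : Function.Injective Ψ := by
      rw [injective_iff_map_eq_zero]
      rintro ⟨x, s⟩ hp
      have hs : s = 0 := by
        have := hΨinr (x, s)
        rw [hp] at this
        simpa using this.symm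
      have hx : (x : Fin n → ℝ) = (c⁻¹ * (a ⬝ᵥ (x : Fin n → ℝ))) • u := by
        have h4 := hΨinl (x, s)
        rw [hp, hs] at h4
        have h0 : (x : Fin n → ℝ) + (t * 0 - c⁻¹ * (a ⬝ᵥ (x : Fin n → ℝ))) • u = 0 := by
          rw [← h4]; rfl
        have h5 : (t * 0 - c⁻¹ * (a ⬝ᵥ (x : Fin n → ℝ))) = -(c⁻¹ * (a ⬝ᵥ (x : Fin n → ℝ))) := by
          ring
        rw [h5, neg_smul] at h0
        exact add_neg_eq_zero.mp h0
      have hBx : B *ᵥ (x : Fin n → ℝ) = 0 := by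
        rw [hx, Matrix.mulVec_smul, hu, smul_zero]
      have hq : (x : Fin n → ℝ) ⬝ᵥ (B *ᵥ (x : Fin n → ℝ)) = 0 := by rw [hBx, dotProduct_zero]
      have hx0 : (x : Fin n → ℝ) = 0 := by
        by_contra h
        have := hWpos _ x.2 h
        rw [hq] at this
        exact lt_irrefl 0 this
      have : x = 0 := Subtype.ext hx0
      rw [this, hs]
      rfl
    have hrank : Module.finrank ℝ (LinearMap.range Ψ) = posInertia B + 1 := by
      rw [LinearMap.finrank_range_of_inj hinj, Module.finrank_prod, hWrank,
        Module.finrank_self]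
    have hpos : ∀ v ∈ LinearMap.range Ψ, v ≠ 0 → 0 < v ⬝ᵥ (borderMatrix B a b *ᵥ v) := by
      rintro v ⟨p, rfl⟩ hv0
      rw [key]
      have hp0 : p ≠ 0 := by rintro rfl; exact hv0 (map_zero Ψ)
      rcases eq_or_ne (p.1 : Fin n → ℝ) 0 with h | h
      · have hs : p.2 ≠ 0 := by
          intro hs
          apply hp0
          have : p.1 = 0 := Subtype.ext h
          exact Prod.ext this hs
        rw [h]
        simp only [zero_dotProduct, zero_add]
        positivity
      · have := hWpos _ p.1.2 h
        nlinarith [sq_nonneg p.2]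
    calc posInertia B + 1 = Module.finrank ℝ (LinearMap.range Ψ) := hrank.symm
      _ ≤ posInertia (borderMatrix B a b) := posdef_subspace_le hAh _ hpos
  -- Direction ≤
  have hle : posInertia (borderMatrix B a b) ≤ posInertia B + 1 := by
    obtain ⟨W, hWrank, hWpos⟩ := exists_posdef_subspace hAh
    let j : (Fin n → ℝ) →ₗ[ℝ] (Fin n ⊕ Unit → ℝ) :=
      (LinearEquiv.sumArrowLequivProdArrow (Fin n) Unit ℝ ℝ).symm.toLinearMap ∘ₗ
        LinearMap.prod LinearMap.id 0
    have hjinl : ∀ x, (j x) ∘ Sum.inl = x := by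
      intro x; funext i; simp [j, LinearEquiv.sumArrowLequivProdArrow]
    have hjinr : ∀ x, (j x) (Sum.inr ()) = 0 := by
      intro x; simp [j, LinearEquiv.sumArrowLequivProdArrow]
    let W' : Submodule ℝ (Fin n → ℝ) := W.comap j
    have hW'pos : ∀ x ∈ W', x ≠ 0 → 0 < x ⬝ᵥ (B *ᵥ x) := by
      intro x hx hx0
      have h1 : j x ∈ W := hx
      have h2 : j x ≠ 0 := by
        intro h
        apply hx0
        have h' : j x ∘ Sum.inl = (0 : Fin n ⊕ Unit → ℝ) ∘ Sum.inl := by rw [h]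
        rw [hjinl] at h'
        simpa using h'
      have h3 := hWpos _ h1 h2
      rw [border_quad, hjinl, hjinr] at h3
      simpa using h3
    let f : ↥W →ₗ[ℝ] ℝ := (LinearMap.proj (R := ℝ) (φ := fun _ : Fin n ⊕ Unit => ℝ)
      (Sum.inr ())).comp W.subtype
    have hrn : Module.finrank ℝ (LinearMap.range f) + Module.finrank ℝ (LinearMap.ker f)
        = Module.finrank ℝ ↥W := LinearMap.finrank_range_add_finrank_ker f
    have hr1 : Module.finrank ℝ (LinearMap.range f) ≤ 1 := by
      have h := Submodule.finrank_le (LinearMap.range f)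
      simpa [Module.finrank_self] using h
    let g : ↥(LinearMap.ker f) →ₗ[ℝ] (Fin n → ℝ) :=
      (LinearMap.funLeft ℝ ℝ Sum.inl).comp (W.subtype.comp (LinearMap.ker f).subtype)
    have hker : ∀ v : ↥(LinearMap.ker f), ((v : ↥W) : Fin n ⊕ Unit → ℝ) (Sum.inr ()) = 0 :=
      fun v => LinearMap.mem_ker.mp v.2
    have hginj : Function.Injective g := by
      rw [injective_iff_map_eq_zero]
      intro v hv
      apply Subtype.ext; apply Subtype.ext
      funext i
      cases i with
      | inl i => exact congrFun hv i
      | inr i =>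
        cases i
        exact hker v
    have hrange : LinearMap.range g ≤ W' := by
      rintro _ ⟨v, rfl⟩
      show j (g v) ∈ W
      have heq : j (g v) = ((v : ↥W) : Fin n ⊕ Unit → ℝ) := by
        funext i
        cases i with
        | inl i => exact congrFun (hjinl (g v)) i
        | inr i =>
          cases i
          rw [hjinr, hker v]
      rw [heq]
      exact (v : ↥W).2
    have hkerle : Module.finrank ℝ (LinearMap.ker f) ≤ Module.finrank ℝ W' := by
      rw [← LinearMap.finrank_range_of_inj hginj]
      exact Submodule.finrank_mono hrange
    have hW'le := posdef_subspace_le hBh W' hW'pos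
    omega
  omega
end
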